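/- Let M be an oriented closed connected manifold with fundamental group Γ, let (X,μ) and (Y,ν) be standard Γ-spaces, and t ∈ [0,1]. Let Z = X ⊔ Y with the probability measure t·μ ⊔ (1−t)·ν and the obvious Γ-action. Then ⎸M⎹^Z = t·⎸M⎹^X + (1−t)·⎸M⎹^Y. -/

import Mathlib

open scoped BigOperators
open Finsupp

noncomputable section

namespace SimplexCategory

/-- The topological simplex, as defined in the older Mathlib (since removed there). -/
def toTopObj (x : SimplexCategory) : Set (Fin (x.len + 1) → NNReal) := { f | ∑ i, f i = 1 }

/-- The induced map on topological simplices, as defined in the older Mathlib. -/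
def toTopMap {x y : SimplexCategory} (f : x ⟶ y) (g : x.toTopObj) : y.toTopObj :=
  ⟨fun i => ∑ j ∈ Finset.univ.filter (fun k => f.toOrderHom k = i),
    (g : Fin (x.len + 1) → NNReal) j, by
    simp only [toTopObj, Set.mem_ofPred_eq]
    rw [← Finset.sum_biUnion]
    · have hg : ∑ i, (g : Fin (x.len + 1) → NNReal) i = 1 := g.2
      convert hg
      simp [Finset.eq_univ_iff_forall]
    · apply Set.pairwiseDisjoint_filter⟩

theorem continuous_toTopMap {x y : SimplexCategory} (f : x ⟶ y) : Continuous (toTopMap f) := by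
  refine Continuous.subtype_mk (continuous_pi fun i => ?_) _
  exact continuous_finsetSum _ (fun j _ => (continuous_apply _).comp continuous_subtype_val)

end SimplexCategory

/-- The topological standard `n`-simplex. -/
abbrev TSimplex (n : ℕ) : Type :=
  (SimplexCategory.toTopObj (SimplexCategory.mk n))

/-- Singular `n`-simplices of a space `X`. -/
abbrev SSimplex (n : ℕ) (X : Type) [TopologicalSpace X] : Type := C(TSimplex n, X)

/-- Singular `n`-chains of `X` with coefficients in an abelian group `A`,
with its `ℓ¹`-flavoured finitely supported model. -/
abbrev SChains (n : ℕ) (X : Type) [TopologicalSpace X] (A : Type) [AddCommGroup A] : Type :=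
  SSimplex n X →₀ A

/-- The `i`-th face inclusion of topological simplices. -/
def face (n : ℕ) (i : Fin (n + 2)) : C(TSimplex n, TSimplex (n + 1)) :=
  ⟨fun t => SimplexCategory.toTopMap (SimplexCategory.δ i) t,
    SimplexCategory.continuous_toTopMap _⟩

/-- The singular boundary operator from degree `n+1` to degree `n`. -/
def bdryMap (n : ℕ) (X : Type) [TopologicalSpace X] (A : Type) [AddCommGroup A] :
    SChains (n + 1) X A →ₗ[ℤ] SChains n X A :=
  Finsupp.lsum ℤ fun σ =>
    ∑ i : Fin (n + 2), ((-1 : ℤ) ^ (i : ℕ)) •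
      (Finsupp.lsingle (σ.comp (face n i)) : A →ₗ[ℤ] SChains n X A)

/-- The boundary operator out of degree `n` (the zero map in degree `0`). -/
def bdryFrom (n : ℕ) (X : Type) [TopologicalSpace X] (A : Type) [AddCommGroup A] :
    SChains n X A →ₗ[ℤ] SChains (n - 1) X A :=
  match n with
  | 0 => 0
  | (m + 1) => bdryMap m X A

/-- Singular `n`-cycles. -/
def cyclesSub (n : ℕ) (X : Type) [TopologicalSpace X] (A : Type) [AddCommGroup A] :
    Submodule ℤ (SChains n X A) :=
  LinearMap.ker (bdryFrom n X A)

/-- Singular `n`-boundaries. -/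
def bdriesSub (n : ℕ) (X : Type) [TopologicalSpace X] (A : Type) [AddCommGroup A] :
    Submodule ℤ (SChains n X A) :=
  LinearMap.range (bdryMap n X A)

/-- The `ℓ¹`-norm of an integral singular chain. -/
def l1Z {n : ℕ} {X : Type} [TopologicalSpace X] (c : SChains n X ℤ) : ℝ :=
  c.sum fun _ a => |(a : ℝ)|

/-- The `ℓ¹`-norm of a real singular chain. -/
def l1R {n : ℕ} {X : Type} [TopologicalSpace X] (c : SChains n X ℝ) : ℝ :=
  c.sum fun _ a => |a|

/-- Change of coefficients `ℤ → ℝ` on singular chains. -/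
def castChain {n : ℕ} {X : Type} [TopologicalSpace X] (c : SChains n X ℤ) : SChains n X ℝ :=
  Finsupp.mapRange (fun a : ℤ => (a : ℝ)) Int.cast_zero c

/-- `z` is an integral fundamental cycle of `X` in degree `n`:  it is a cycle whose homology
class freely generates `H_n(X;ℤ)` (which for an oriented closed connected `n`-manifold
characterises the fundamental class up to sign). -/
def IsFundCycle (n : ℕ) (X : Type) [TopologicalSpace X] (z : SChains n X ℤ) : Prop :=
  z ∈ cyclesSub n X ℤ ∧
  (∀ w ∈ cyclesSub n X ℤ, ∃ k : ℤ, w - k • z ∈ bdriesSub n X ℤ) ∧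
  (∀ k : ℤ, k • z ∈ bdriesSub n X ℤ → k = 0)

/-- The `ℓ¹`-semi-norm (over `ℤ`) of the homology class of the cycle `z`. -/
def clNormZ (n : ℕ) (X : Type) [TopologicalSpace X] (z : SChains n X ℤ) : ℝ :=
  sInf {r : ℝ | ∃ c, c ∈ cyclesSub n X ℤ ∧ c - z ∈ bdriesSub n X ℤ ∧ r = l1Z c}

/-- The `ℓ¹`-semi-norm of the image in real homology of the class of the integral cycle `z`;
for a fundamental cycle `z` of `M` this is the simplicial volume `‖M‖`. -/
def realSV (n : ℕ) (X : Type) [TopologicalSpace X] (z : SChains n X ℤ) : ℝ :=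
  sInf {r : ℝ | ∃ c, c ∈ cyclesSub n X ℝ ∧ castChain z - c ∈ bdriesSub n X ℝ ∧ r = l1R c}

/-- The integral simplicial volume `‖X‖_ℤ`. -/
def intSV (n : ℕ) (X : Type) [TopologicalSpace X] : ℝ :=
  sInf {r : ℝ | ∃ z, IsFundCycle n X z ∧ r = clNormZ n X z}

/-- `N` is an oriented closed connected topological `n`-manifold (orientability is recorded
through the existence of fundamental cycles in the statements below). -/
def IsClosedConnectedManifold (n : ℕ) (N : Type) [TopologicalSpace N] : Prop :=
  CompactSpace N ∧ ConnectedSpace N ∧ T2Space N ∧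
    Nonempty (ChartedSpace (EuclideanSpace ℝ (Fin n)) N)

/-- The data contributing value `r` to the stable integral simplicial volume of `M`:
a `d`-sheeted covering `p : N → M` by an oriented closed connected `n`-manifold `N`
together with a fundamental cycle of `N`, with `r = ‖N‖_ℤ / d`. -/
def IsCoverDatum (n : ℕ) (M : Type) [TopologicalSpace M] (N : Type) [TopologicalSpace N]
    (p : N → M) (d : ℕ) (r : ℝ) : Prop :=
  IsClosedConnectedManifold n N ∧ 0 < d ∧ IsCoveringMap p ∧
    (∀ x : M, Nat.card (p ⁻¹' {x}) = d) ∧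
    ∃ z, IsFundCycle n N z ∧ r = clNormZ n N z / d

/-- The stable integral simplicial volume `‖M‖_ℤ^∞`. -/
def stisv (n : ℕ) (M : Type) [TopologicalSpace M] : ℝ :=
  sInf {r : ℝ | ∃ (N : Type) (tN : TopologicalSpace N) (p : N → M) (d : ℕ),
    @IsCoverDatum n M _ N tN p d r}

end

open MeasureTheory

noncomputable section

/-- A standard `Γ`-space structure on `X`: a probability measure on the standard Borel
space `X` together with a measurable measure-preserving (left) `Γ`-action. -/
structure StdStr (Γ : Type) [Group Γ] (X : Type) [MeasurableSpace X] where
  μ : Measure X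
  borel : StandardBorelSpace X
  prob : IsProbabilityMeasure μ
  act : Γ → X → X
  meas : ∀ g, MeasurePreserving (act g) μ μ
  act_one : ∀ x, act 1 x = x
  act_mul : ∀ g h x, act (g * h) x = act g (act h x)

variable {Γ : Type} [Group Γ] {X : Type} [MeasurableSpace X]

/-- The coefficient module `L^∞(X,μ;ℤ)` (for `b = true`) respectively `L^∞(X,μ;ℝ)`
(for `b = false`), realised as essentially bounded (and, if `b = true`, a.e.
integer-valued) elements of the space of a.e.-equivalence classes of measurable
real-valued functions. -/
def LinfG (S : StdStr Γ X) (b : Bool) : AddSubgroup (X →ₘ[S.μ] ℝ) where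
  carrier := {f | (∃ C : ℝ, ∀ᵐ x ∂S.μ, |f x| ≤ C) ∧
    (b → ∀ᵐ x ∂S.μ, ∃ k : ℤ, f x = (k : ℝ))}
  add_mem' := by
    rintro f g ⟨⟨C, hC⟩, hf⟩ ⟨⟨D, hD⟩, hg⟩
    constructor
    · refine ⟨C + D, ?_⟩
      filter_upwards [hC, hD, AEEqFun.coeFn_add f g] with x h1 h2 h3
      rw [h3]
      exact (abs_add_le _ _).trans (add_le_add h1 h2)
    · intro hb
      filter_upwards [hf hb, hg hb, AEEqFun.coeFn_add f g] with x ⟨k, hk⟩ ⟨l, hl⟩ h3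
      exact ⟨k + l, by rw [h3]; simp [Pi.add_apply, hk, hl]⟩
  zero_mem' := by
    constructor
    · refine ⟨0, ?_⟩
      filter_upwards [AEEqFun.coeFn_zero (μ := S.μ) (β := ℝ)] with x h
      simp [h]
    · intro _
      filter_upwards [AEEqFun.coeFn_zero (μ := S.μ) (β := ℝ)] with x h
      exact ⟨0, by simp [h]⟩
  neg_mem' := by
    rintro f ⟨⟨C, hC⟩, hf⟩
    constructor
    · refine ⟨C, ?_⟩
      filter_upwards [hC, AEEqFun.coeFn_neg f] with x h1 h2
      rw [h2]; simpa using h1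
    · intro hb
      filter_upwards [hf hb, AEEqFun.coeFn_neg f] with x ⟨k, hk⟩ h2
      exact ⟨-k, by rw [h2]; simp [hk]⟩

/-- The right `Γ`-action on `L^∞`: `(f · g)(x) = f(g • x)`. -/
def rhoG (S : StdStr Γ X) (b : Bool) (g : Γ) (f : (LinfG S b)) : (LinfG S b) :=
  ⟨AEEqFun.compMeasurePreserving (f : X →ₘ[S.μ] ℝ) (S.act g) (S.meas g), by
    obtain ⟨⟨C, hC⟩, hf⟩ := f.2
    constructor
    · refine ⟨C, ?_⟩
      have := (S.meas g).quasiMeasurePreserving.ae hC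
      filter_upwards [AEEqFun.coeFn_compMeasurePreserving
        (f : X →ₘ[S.μ] ℝ) (S.meas g), this] with x h1 h2
      rw [h1]; exact h2
    · intro hb
      have := (S.meas g).quasiMeasurePreserving.ae (hf hb)
      filter_upwards [AEEqFun.coeFn_compMeasurePreserving
        (f : X →ₘ[S.μ] ℝ) (S.meas g), this] with x h1 h2
      rw [h1]; exact h2⟩

/-- The constant function with (integer) value `k` in the coefficient module. -/
def constLG (S : StdStr Γ X) (b : Bool) (k : ℤ) : (LinfG S b) :=
  ⟨k • (AEEqFun.const X (1 : ℝ) : X →ₘ[S.μ] ℝ), by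
    constructor
    · refine ⟨|(k : ℝ)|, ?_⟩
      have h1 : ((k • (AEEqFun.const X (1 : ℝ) : X →ₘ[S.μ] ℝ)) : X →ₘ[S.μ] ℝ)
          =ᵐ[S.μ] fun _ => (k : ℝ) := by
        filter_upwards [AEEqFun.coeFn_smul (k : ℤ) (AEEqFun.const X (1 : ℝ) : X →ₘ[S.μ] ℝ),
          AEEqFun.coeFn_const X (1 : ℝ)] with x h2 h3
        simp [h2, h3]
      filter_upwards [h1] with x h
      rw [h]
    · intro _
      have h1 : ((k • (AEEqFun.const X (1 : ℝ) : X →ₘ[S.μ] ℝ)) : X →ₘ[S.μ] ℝ)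
          =ᵐ[S.μ] fun _ => (k : ℝ) := by
        filter_upwards [AEEqFun.coeFn_smul (k : ℤ) (AEEqFun.const X (1 : ℝ) : X →ₘ[S.μ] ℝ),
          AEEqFun.coeFn_const X (1 : ℝ)] with x h2 h3
        simp [h2, h3]
      filter_upwards [h1] with x h
      exact ⟨k, h⟩⟩

theorem constLG_zero (S : StdStr Γ X) (b : Bool) : constLG S b 0 = 0 :=
  Subtype.ext (zero_smul ℤ _)

variable {Mt : Type} [TopologicalSpace Mt]

/-- Change of coefficients from `ℤ` to `L^∞` (constant functions) on chains of the
universal covering; this realises `C_*(M̃;ℤ) → L^∞ ⊗ C_*(M̃;ℤ)` at the chain level. -/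
def iotaChain (S : StdStr Γ X) (b : Bool) {n : ℕ} (c : SChains n Mt ℤ) :
    SChains n Mt (LinfG S b) :=
  Finsupp.mapRange (constLG S b) (constLG_zero S b) c

/-- The submodule of relations defining the twisted coefficients
`L^∞(X;ℤ) ⊗_{ℤΓ} C_n(M̃;ℤ)`:  it is spanned by the elements
`(g·σ) ⊗ f - σ ⊗ (f·g)`. -/
def relSub (n : ℕ) (actM : Γ → C(Mt, Mt)) (S : StdStr Γ X) (b : Bool) :
    Submodule ℤ (SChains n Mt (LinfG S b)) :=
  Submodule.span ℤ {c | ∃ (g : Γ) (σ : SSimplex n Mt) (f : (LinfG S b)),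
    c = Finsupp.single ((actM g).comp σ) f - Finsupp.single σ (rhoG S b g f)}

/-- The parametrised `ℓ¹`-norm `Σ_σ ∫_X |f_σ| dμ` of a twisted chain. -/
def normP (S : StdStr Γ X) (b : Bool) {n : ℕ} (c : SChains n Mt (LinfG S b)) : ℝ :=
  c.sum fun _ f => ∫ x, |(f : X →ₘ[S.μ] ℝ) x| ∂S.μ

/-- Pushforward of chains along the covering projection. -/
def pushf {M : Type} [TopologicalSpace M] (π : C(Mt, M)) {n : ℕ}
    (c : SChains n Mt ℤ) : SChains n M ℤ :=
  Finsupp.mapDomain (fun σ => π.comp σ) c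

/-- `c` is an `X`-parametrised fundamental cycle for the fundamental cycle `z` of `M`:
working in the model `L^∞ ⊗_{ℤΓ} C_*(M̃;ℤ) = C_*(M̃;L^∞)/rel`, the chain `c` is a cycle
of the quotient complex and represents the image of the class of `z` under the change of
coefficients given by the constant inclusion `ℤ ↪ L^∞`. -/
def IsPFC (n : ℕ) (Γ : Type) [Group Γ] (Mt M : Type) [TopologicalSpace Mt]
    [TopologicalSpace M] (π : C(Mt, M)) (actM : Γ → C(Mt, Mt))
    (X : Type) [MeasurableSpace X] (S : StdStr Γ X) (b : Bool)
    (z : SChains n M ℤ) (c : SChains n Mt (LinfG S b)) : Prop :=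
  bdryFrom n Mt (LinfG S b) c ∈ relSub (n - 1) actM S b ∧
  ∃ zt : SChains n Mt ℤ, pushf π zt = z ∧
    c - iotaChain S b zt ∈ relSub n actM S b ⊔ bdriesSub n Mt (LinfG S b)

/-- The `X`-parametrised simplicial volume `⎸M⎹^X` (with integral coefficients for
`b = true`, with real coefficients for `b = false`). -/
def pSV (b : Bool) (n : ℕ) (Γ : Type) [Group Γ] (Mt M : Type) [TopologicalSpace Mt]
    [TopologicalSpace M] (π : C(Mt, M)) (actM : Γ → C(Mt, Mt))
    (X : Type) [MeasurableSpace X] (S : StdStr Γ X) (z : SChains n M ℤ) : ℝ :=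
  sInf {r : ℝ | ∃ c, IsPFC n Γ Mt M π actM X S b z c ∧ r = normP S b c}

/-- The integral foliated simplicial volume `⎸M⎹`: the infimum of the `X`-parametrised
simplicial volumes over all standard `Γ`-spaces `X`. -/
def ifsv (n : ℕ) (Γ : Type) [Group Γ] (Mt M : Type) [TopologicalSpace Mt]
    [TopologicalSpace M] (π : C(Mt, M)) (actM : Γ → C(Mt, Mt))
    (z : SChains n M ℤ) : ℝ :=
  sInf {r : ℝ | ∃ (X : Type) (mX : MeasurableSpace X) (S : @StdStr Γ _ X mX),
    r = @pSV true n Γ _ Mt M _ _ π actM X mX S z}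

/-- `π : M̃ → M` is a universal covering with deck transformation action `actM` of `Γ`
(so that `Γ` is identified with the fundamental group of `M`). -/
structure UnivCover (Γ : Type) [Group Γ] (Mt M : Type) [TopologicalSpace Mt]
    [TopologicalSpace M] (π : C(Mt, M)) (actM : Γ → C(Mt, Mt)) : Prop where
  covering : IsCoveringMap π
  simplyConnected : SimplyConnectedSpace Mt
  deck_proj : ∀ g x, π (actM g x) = π x
  deck_trans : ∀ x y, π x = π y → ∃ g, actM g x = y
  deck_free : ∀ g x, actM g x = x → g = 1
  act_one : ∀ x, actM 1 x = x
  act_mul : ∀ g h x, actM (g * h) x = actM g (actM h x)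

end
section Part1
open MeasureTheory Finsupp

namespace SVAux

variable {A B : Type} [AddCommGroup A] [AddCommGroup B]

/-- Chain map induced by a coefficient map. -/
noncomputable abbrev chmap {W : Type} [TopologicalSpace W] {n : ℕ} (φ : A →ₗ[ℤ] B) :
    SChains n W A →ₗ[ℤ] SChains n W B := Finsupp.mapRange.linearMap φ

theorem chmap_single {W : Type} [TopologicalSpace W] {n : ℕ} (φ : A →ₗ[ℤ] B)
    (σ : SSimplex n W) (a : A) :
    chmap φ (Finsupp.single σ a) = Finsupp.single σ (φ a) := by
  rw [Finsupp.mapRange.linearMap_apply, Finsupp.mapRange_single]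

theorem chmap_apply {W : Type} [TopologicalSpace W] {n : ℕ} (φ : A →ₗ[ℤ] B)
    (c : SChains n W A) (σ : SSimplex n W) :
    chmap φ c σ = φ (c σ) := by
  rw [Finsupp.mapRange.linearMap_apply, Finsupp.mapRange_apply]

theorem bdryMap_single {W : Type} [TopologicalSpace W] (n : ℕ) (σ : SSimplex (n+1) W) (a : A) :
    bdryMap n W A (Finsupp.single σ a)
      = ∑ i : Fin (n+2), ((-1 : ℤ)^(i:ℕ)) • Finsupp.single (σ.comp (face n i)) a := by
  rw [bdryMap, Finsupp.lsum_single]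
  simp

theorem chmap_bdryMap {W : Type} [TopologicalSpace W] {n : ℕ} (φ : A →ₗ[ℤ] B)
    (c : SChains (n+1) W A) :
    bdryMap n W B (chmap φ c) = chmap φ (bdryMap n W A c) := by
  induction c using Finsupp.induction_linear with
  | zero => simp
  | add f g hf hg => simp only [map_add, hf, hg]
  | single σ a =>
      rw [chmap_single, bdryMap_single, bdryMap_single, map_sum]
      refine Finset.sum_congr rfl fun i _ => ?_
      rw [LinearMap.map_smul, chmap_single]

theorem chmap_bdryFrom {W : Type} [TopologicalSpace W] {n : ℕ} (φ : A →ₗ[ℤ] B)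
    (c : SChains n W A) :
    bdryFrom n W B (chmap φ c) = chmap φ (bdryFrom n W A c) := by
  cases n with
  | zero => simp [bdryFrom]
  | succ m => exact chmap_bdryMap φ c

end SVAux
end Part1
section Part2
open MeasureTheory Finsupp
open scoped NNReal

namespace SVAux

/-! ### Connectedness of the topological simplex -/

/-- A vertex of the standard simplex. -/
def vtx (n : ℕ) : TSimplex n :=
  ⟨fun i => if (show Fin (n+1) from i) = 0 then 1 else 0, by
    show _ ∈ SimplexCategory.toTopObj _
    simp only [SimplexCategory.toTopObj, Set.mem_setOf_eq]
    show (∑ i : Fin (n + 1), if i = 0 then (1 : ℝ≥0) else 0) = 1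
    simp⟩

/-- The parameter of the straight-line path, as a nonnegative real. -/
noncomputable def nnI (s : unitInterval) : ℝ≥0 := Real.toNNReal s.1

theorem nnI_le_one (s : unitInterval) : nnI s ≤ 1 := by
  rw [nnI, ← Real.toNNReal_one]
  exact Real.toNNReal_mono s.2.2

/-- The straight-line path in the simplex. -/
noncomputable def segPath {n : ℕ} (x y : TSimplex n) : Path x y where
  toFun s := ⟨fun i => (1 - nnI s) * x.1 i + nnI s * y.1 i, by
    have h1 : ∑ i, x.1 i = 1 := x.2
    have h2 : ∑ i, y.1 i = 1 := y.2
    show _ ∈ SimplexCategory.toTopObj _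
    simp only [SimplexCategory.toTopObj, Set.mem_setOf_eq]
    rw [Finset.sum_add_distrib, ← Finset.mul_sum, ← Finset.mul_sum, h1, h2, mul_one, mul_one,
      tsub_add_cancel_of_le (nnI_le_one s)]⟩
  continuous_toFun := by
    apply Continuous.subtype_mk
    apply continuous_pi; intro i
    have hc : Continuous nnI := continuous_real_toNNReal.comp continuous_subtype_val
    exact ((continuous_const.sub hc).mul continuous_const).add (hc.mul continuous_const)
  source' := by
    apply Subtype.ext; funext i
    simp [nnI]
  target' := by
    apply Subtype.ext; funext i
    simp [nnI]

instance (n : ℕ) : PathConnectedSpace (TSimplex n) :=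
  ⟨⟨vtx n⟩, fun x y => ⟨segPath x y⟩⟩

/-! ### Unique lifting along the universal covering -/

variable {Γ : Type} [Group Γ] {Mt M : Type} [TopologicalSpace Mt] [TopologicalSpace M]
  {π : C(Mt, M)} {actM : Γ → C(Mt, Mt)}

theorem lift_unique (hU : UnivCover Γ Mt M π actM) {n : ℕ} (σ σ' : SSimplex n Mt)
    (h : π.comp σ = π.comp σ') : ∃ g, (actM g).comp σ = σ' := by
  obtain ⟨g, hg⟩ := hU.deck_trans (σ (vtx n)) (σ' (vtx n))
    (by simpa using DFunLike.congr_fun h (vtx n))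
  refine ⟨g, ?_⟩
  have heq : ⇑((actM g).comp σ) = ⇑σ' := by
    refine hU.covering.eq_of_comp_eq ((actM g).continuous.comp σ.continuous)
      σ'.continuous ?_ (vtx n) (by simpa using hg)
    funext u
    show π (actM g (σ u)) = π (σ' u)
    rw [hU.deck_proj]
    exact DFunLike.congr_fun h u
  exact ContinuousMap.ext (congrFun heq)

/-! ### Pushforward lemmas -/

theorem pushf_eq {n : ℕ} (c : SChains n Mt ℤ) :
    pushf π c = Finsupp.mapDomain.addMonoidHom (fun σ => π.comp σ) c := rfl

theorem pushf_single {n : ℕ} (σ : SSimplex n Mt) (a : ℤ) :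
    pushf π (Finsupp.single σ a) = Finsupp.single (π.comp σ) a :=
  Finsupp.mapDomain_single

theorem pushf_bdryMap {n : ℕ} (c : SChains (n+1) Mt ℤ) :
    pushf π (bdryMap n Mt ℤ c) = bdryMap n M ℤ (pushf π c) := by
  induction c using Finsupp.induction_linear with
  | zero => simp [pushf_eq]
  | add f g hf hg => simp only [map_add, pushf_eq] at *; simp [hf, hg]
  | single σ a =>
      rw [pushf_single, bdryMap_single, bdryMap_single, pushf_eq, map_sum]
      refine Finset.sum_congr rfl fun i _ => ?_
      rw [AddMonoidHom.map_zsmul, ← pushf_eq, pushf_single, ContinuousMap.comp_assoc]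

theorem pushf_bdryFrom {n : ℕ} (c : SChains n Mt ℤ) :
    pushf π (bdryFrom n Mt ℤ c) = bdryFrom n M ℤ (pushf π c) := by
  cases n with
  | zero => simp [bdryFrom, pushf_eq]
  | succ m => exact pushf_bdryMap c

end SVAux
end Part2
section Part3
open MeasureTheory Finsupp

namespace SVAux

variable {Γ : Type} [Group Γ] {Mt M : Type} [TopologicalSpace Mt] [TopologicalSpace M]
  {π : C(Mt, M)} {actM : Γ → C(Mt, Mt)} {X : Type} [MeasurableSpace X]

theorem coeFn_constLG (S : StdStr Γ X) (b : Bool) (k : ℤ) :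
    ((constLG S b k : LinfG S b) : X →ₘ[S.μ] ℝ) =ᵐ[S.μ] fun _ => (k : ℝ) := by
  show ((k • (AEEqFun.const X (1 : ℝ) : X →ₘ[S.μ] ℝ)) : X →ₘ[S.μ] ℝ) =ᵐ[S.μ] _
  filter_upwards [AEEqFun.coeFn_smul (k : ℤ) (AEEqFun.const X (1 : ℝ) : X →ₘ[S.μ] ℝ),
    AEEqFun.coeFn_const X (1 : ℝ)] with x h2 h3
  simp [h2, h3]

theorem rhoG_constLG (S : StdStr Γ X) (b : Bool) (g : Γ) (k : ℤ) :
    rhoG S b g (constLG S b k) = constLG S b k := by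
  apply Subtype.ext
  apply MeasureTheory.AEEqFun.ext
  filter_upwards [AEEqFun.coeFn_compMeasurePreserving
      ((constLG S b k : LinfG S b) : X →ₘ[S.μ] ℝ) (S.meas g),
    (S.meas g).quasiMeasurePreserving.ae (coeFn_constLG S b k),
    coeFn_constLG S b k] with x h1 h2 h3
  show (rhoG S b g (constLG S b k) : X →ₘ[S.μ] ℝ) x = _
  rw [show ((rhoG S b g (constLG S b k) : LinfG S b) : X →ₘ[S.μ] ℝ)
      = AEEqFun.compMeasurePreserving ((constLG S b k : LinfG S b) : X →ₘ[S.μ] ℝ)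
        (S.act g) (S.meas g) from rfl]
  rw [h1, h3]
  exact h2

/-- The constant-inclusion `ℤ → L^∞` as a linear map. -/
noncomputable def constL (S : StdStr Γ X) (b : Bool) : ℤ →ₗ[ℤ] (LinfG S b) where
  toFun := constLG S b
  map_add' k l := by
    apply Subtype.ext
    rw [AddSubgroup.coe_add]
    exact add_smul k l _
  map_smul' m k := by
    apply Subtype.ext
    rw [RingHom.id_apply, AddSubgroup.coe_zsmul]
    show (m * k) • _ = m • k • _
    rw [mul_smul]

/-- `iotaChain` as a linear map. -/
noncomputable def iotaL (S : StdStr Γ X) (b : Bool) {n : ℕ} :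
    SChains n Mt ℤ →ₗ[ℤ] SChains n Mt (LinfG S b) :=
  chmap (constL S b)

theorem iotaChain_eq (S : StdStr Γ X) (b : Bool) {n : ℕ} (c : SChains n Mt ℤ) :
    iotaChain S b c = iotaL S b c := by
  apply Finsupp.ext; intro σ
  rw [iotaChain, Finsupp.mapRange_apply, iotaL, chmap_apply]
  rfl

theorem iota_ker (hU : UnivCover Γ Mt M π actM) (S : StdStr Γ X) (b : Bool) {n : ℕ}
    (w : SChains n Mt ℤ) (hw : pushf π w = 0) : iotaChain S b w ∈ relSub n actM S b := by
  classical
  suffices h : ∀ (m : ℕ) (w : SChains n Mt ℤ), w.support.card = m → pushf π w = 0 →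
      iotaChain S b w ∈ relSub n actM S b from h _ w rfl hw
  clear hw w
  intro m
  induction m using Nat.strong_induction_on with
  | _ m IH =>
    intro w hm hw
    by_cases hw0 : w = 0
    · subst hw0
      rw [iotaChain_eq, map_zero]
      exact Submodule.zero_mem _
    obtain ⟨σ, hσ⟩ := Finsupp.support_nonempty_iff.2 hw0
    have key : ∀ τ, pushf π w τ = ∑ a ∈ w.support, if π.comp a = τ then w a else 0 := by
      intro τ
      rw [pushf, Finsupp.mapDomain, Finsupp.sum_apply, Finsupp.sum]
      exact Finset.sum_congr rfl fun a _ => Finsupp.single_apply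
    have hex : ∃ σ', σ' ∈ w.support ∧ σ' ≠ σ ∧ π.comp σ' = π.comp σ := by
      by_contra hc
      push_neg at hc
      have h0 : pushf π w (π.comp σ) = w σ := by
        rw [key]
        rw [Finset.sum_eq_single_of_mem σ hσ (fun b hb hbne => if_neg (hc b hb hbne))]
        exact if_pos rfl
      rw [hw] at h0
      exact Finsupp.mem_support_iff.1 hσ h0.symm
    obtain ⟨σ', hσ'mem, hne, hcomp⟩ := hex
    obtain ⟨g, hg⟩ := lift_unique hU σ σ' hcomp.symm
    set k := w σ with hk
    set w' := w - Finsupp.single σ k + Finsupp.single σ' k with hw'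
    have hw'σ : w' σ = 0 := by
      rw [hw']
      simp [Finsupp.single_apply, hne, hk]
    have hsupp : w'.support ⊆ w.support.erase σ := by
      intro τ hτ
      have hval : w' τ ≠ 0 := Finsupp.mem_support_iff.1 hτ
      have hts : τ ≠ σ := by rintro rfl; exact hval hw'σ
      rw [Finset.mem_erase]
      refine ⟨hts, ?_⟩
      by_contra hmem
      apply hval
      have h1 : w τ = 0 := Finsupp.notMem_support_iff.1 hmem
      have h2 : τ ≠ σ' := fun h => hmem (h ▸ hσ'mem)
      rw [hw']
      simp [Finsupp.single_apply, h1, Ne.symm hts, Ne.symm h2]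
    have hcard : w'.support.card < m := by
      calc w'.support.card ≤ (w.support.erase σ).card := Finset.card_le_card hsupp
      _ < w.support.card := Finset.card_erase_lt_of_mem hσ
      _ = m := hm
    have hpush' : pushf π w' = 0 := by
      rw [hw', pushf_eq, map_add, map_sub, ← pushf_eq, ← pushf_eq, ← pushf_eq,
        pushf_single, pushf_single, hcomp, hw]
      abel
    have hmem' := IH _ hcard w' rfl hpush'
    have hw_eq : w = w' + (Finsupp.single σ k - Finsupp.single σ' k) := by
      rw [hw']; abel
    rw [iotaChain_eq, hw_eq, map_add, map_sub]
    rw [iotaChain_eq] at hmem'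
    refine Submodule.add_mem _ hmem' ?_
    rw [iotaL, chmap_single, chmap_single]
    have hgen : Finsupp.single σ' (constLG S b k) - Finsupp.single σ (constLG S b k)
        ∈ relSub n actM S b := by
      apply Submodule.subset_span
      exact ⟨g, σ, constLG S b k, by rw [hg, rhoG_constLG]⟩
    have := Submodule.neg_mem _ hgen
    rw [neg_sub] at this
    exact this

end SVAux
end Part3
section Part4
open MeasureTheory Finsupp

namespace SVAux

variable {Γ : Type} [Group Γ] {Mt M : Type} [TopologicalSpace Mt] [TopologicalSpace M]
  {π : C(Mt, M)} {actM : Γ → C(Mt, Mt)}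
  {X X' : Type} [MeasurableSpace X] [MeasurableSpace X']

theorem chmap_rel {S : StdStr Γ X} {S' : StdStr Γ X'} {b b' : Bool}
    (φ : (LinfG S b) →ₗ[ℤ] (LinfG S' b'))
    (hφ : ∀ g f, φ (rhoG S b g f) = rhoG S' b' g (φ f)) {n : ℕ}
    {c : SChains n Mt (LinfG S b)} (hc : c ∈ relSub n actM S b) :
    chmap φ c ∈ relSub n actM S' b' := by
  have h2 : Submodule.map (chmap (W := Mt) (n := n) φ) (relSub n actM S b)
      ≤ relSub n actM S' b' := by
    rw [relSub, Submodule.map_span, Submodule.span_le]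
    rintro x ⟨c0, ⟨g, σ, f, rfl⟩, rfl⟩
    apply Submodule.subset_span
    refine ⟨g, σ, φ f, ?_⟩
    rw [map_sub, chmap_single, chmap_single, hφ]
  exact h2 ⟨c, hc, rfl⟩

theorem chmap_bdries {S : StdStr Γ X} {S' : StdStr Γ X'} {b b' : Bool}
    (φ : (LinfG S b) →ₗ[ℤ] (LinfG S' b')) {n : ℕ}
    {c : SChains n Mt (LinfG S b)} (hc : c ∈ bdriesSub n Mt (LinfG S b)) :
    chmap φ c ∈ bdriesSub n Mt (LinfG S' b') := by
  obtain ⟨d, hd⟩ := hc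
  exact ⟨chmap φ d, by rw [chmap_bdryMap, hd]⟩

theorem chmap_relsup {S : StdStr Γ X} {S' : StdStr Γ X'} {b b' : Bool}
    (φ : (LinfG S b) →ₗ[ℤ] (LinfG S' b'))
    (hφ : ∀ g f, φ (rhoG S b g f) = rhoG S' b' g (φ f)) {n : ℕ}
    {c : SChains n Mt (LinfG S b)}
    (hc : c ∈ relSub n actM S b ⊔ bdriesSub n Mt (LinfG S b)) :
    chmap φ c ∈ relSub n actM S' b' ⊔ bdriesSub n Mt (LinfG S' b') := by
  obtain ⟨a, ha, d, hd, rfl⟩ := Submodule.mem_sup.1 hc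
  exact Submodule.mem_sup.2 ⟨chmap φ a, chmap_rel φ hφ ha, chmap φ d, chmap_bdries φ hd,
    (map_add _ _ _).symm⟩

theorem chmap_iota {S : StdStr Γ X} {S' : StdStr Γ X'} {b b' : Bool}
    (φ : (LinfG S b) →ₗ[ℤ] (LinfG S' b'))
    (hconst : ∀ k : ℤ, φ (constLG S b k) = constLG S' b' k) {n : ℕ} (zt : SChains n Mt ℤ) :
    chmap φ (iotaChain S b zt) = iotaChain S' b' zt := by
  apply Finsupp.ext; intro σ
  rw [chmap_apply, iotaChain, iotaChain, Finsupp.mapRange_apply, Finsupp.mapRange_apply, hconst]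

theorem isPFC_map {MM : Type} [TopologicalSpace MM] {π : C(Mt, MM)}
    {S : StdStr Γ X} {S' : StdStr Γ X'} {b b' : Bool}
    (φ : (LinfG S b) →ₗ[ℤ] (LinfG S' b'))
    (hφ : ∀ g f, φ (rhoG S b g f) = rhoG S' b' g (φ f))
    (hconst : ∀ k : ℤ, φ (constLG S b k) = constLG S' b' k)
    {n : ℕ} {z : SChains n MM ℤ} {c : SChains n Mt (LinfG S b)}
    (hc : IsPFC n Γ Mt MM π actM X S b z c) :
    IsPFC n Γ Mt MM π actM X' S' b' z (chmap φ c) := by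
  obtain ⟨h1, zt, hzt, h2⟩ := hc
  refine ⟨?_, zt, hzt, ?_⟩
  · rw [chmap_bdryFrom]
    exact chmap_rel φ hφ h1
  · have h3 := chmap_relsup φ hφ h2
    rw [map_sub, chmap_iota φ hconst] at h3
    exact h3

theorem isPFC_iota (hU : UnivCover Γ Mt M π actM) (S : StdStr Γ X) (b : Bool)
    {n : ℕ} {z : SChains n M ℤ} (hzcyc : bdryFrom n M ℤ z = 0)
    (zt : SChains n Mt ℤ) (hzt : pushf π zt = z) :
    IsPFC n Γ Mt M π actM X S b z (iotaChain S b zt) := by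
  refine ⟨?_, zt, hzt, by rw [sub_self]; exact Submodule.zero_mem _⟩
  rw [iotaChain_eq, iotaL, chmap_bdryFrom, ← iotaL, ← iotaChain_eq]
  apply iota_ker hU
  rw [pushf_bdryFrom, hzt, hzcyc]

theorem int_coeff_zero (S : StdStr Γ X) (b : Bool) :
    ∫ x, |((0 : LinfG S b) : X →ₘ[S.μ] ℝ) x| ∂S.μ = 0 := by
  apply integral_eq_zero_of_ae
  have h0 : ((0 : LinfG S b) : X →ₘ[S.μ] ℝ) = 0 := rfl
  rw [h0]
  filter_upwards [AEEqFun.coeFn_zero (μ := S.μ) (β := ℝ)] with x h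
  simp [h]

theorem normP_eq_sum (S : StdStr Γ X) (b : Bool) {n : ℕ} (c : SChains n Mt (LinfG S b))
    {s : Finset (SSimplex n Mt)} (hs : c.support ⊆ s) :
    normP S b c = ∑ σ ∈ s, ∫ x, |((c σ : LinfG S b) : X →ₘ[S.μ] ℝ) x| ∂S.μ :=
  Finsupp.sum_of_support_subset c hs _ (fun _ _ => int_coeff_zero S b)

theorem normP_nonneg (S : StdStr Γ X) (b : Bool) {n : ℕ} (c : SChains n Mt (LinfG S b)) :
    0 ≤ normP S b c :=
  Finset.sum_nonneg fun _ _ => integral_nonneg fun _ => abs_nonneg _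

end SVAux
end Part4
section Part5
open MeasureTheory Finsupp
open scoped ENNReal

namespace SVAux

theorem mInl {X Y : Type} [MeasurableSpace X] [MeasurableSpace Y] :
    MeasurableEmbedding (Sum.inl : X → X ⊕ Y) :=
  ⟨Sum.inl_injective, measurable_inl, by intro s hs; exact hs.inl_image⟩

theorem mInr {X Y : Type} [MeasurableSpace X] [MeasurableSpace Y] :
    MeasurableEmbedding (Sum.inr : Y → X ⊕ Y) :=
  ⟨Sum.inr_injective, measurable_inr, by intro s hs; exact hs.inr_image⟩

theorem borelSpace_sum {X Y : Type} [TopologicalSpace X] [TopologicalSpace Y]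
    [MeasurableSpace X] [MeasurableSpace Y] [BorelSpace X] [BorelSpace Y] :
    BorelSpace (X ⊕ Y) := by
  constructor
  apply le_antisymm
  · intro s hs
    obtain ⟨h1, h2⟩ := measurableSet_sum_iff.1 hs
    rw [← Set.image_preimage_inl_union_image_preimage_inr s]
    letI mb := borel (X ⊕ Y)
    haveI hbb : @BorelSpace (X ⊕ Y) _ mb := ⟨rfl⟩
    have e1 : @MeasurableEmbedding X (X ⊕ Y) _ mb Sum.inl :=
      Topology.IsOpenEmbedding.inl.measurableEmbedding
    have e2 : @MeasurableEmbedding Y (X ⊕ Y) _ mb Sum.inr :=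
      Topology.IsOpenEmbedding.inr.measurableEmbedding
    exact MeasurableSet.union (e1.measurableSet_image' h1) (e2.measurableSet_image' h2)
  · rw [borel]
    apply MeasurableSpace.generateFrom_le
    intro s hs
    exact measurableSet_sum_iff.2
      ⟨(hs.preimage continuous_inl).measurableSet, (hs.preimage continuous_inr).measurableSet⟩

theorem standardBorel_sum {X Y : Type} [MeasurableSpace X] [MeasurableSpace Y]
    (hX : StandardBorelSpace X) (hY : StandardBorelSpace Y) :
    StandardBorelSpace (X ⊕ Y) := by
  obtain ⟨τX, hbX, hpX⟩ := hX.polish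
  obtain ⟨τY, hbY, hpY⟩ := hY.polish
  exact ⟨⟨instTopologicalSpaceSum, borelSpace_sum, inferInstance⟩⟩

variable {Γ : Type} [Group Γ] {X Y : Type} [MeasurableSpace X] [MeasurableSpace Y]

/-- The convex-combination measure on the disjoint union. -/
noncomputable def zeta (S : StdStr Γ X) (T : StdStr Γ Y) (t : ℝ) : Measure (X ⊕ Y) :=
  ENNReal.ofReal t • S.μ.map Sum.inl + ENNReal.ofReal (1 - t) • T.μ.map Sum.inr

theorem zeta_apply (S : StdStr Γ X) (T : StdStr Γ Y) (t : ℝ) (s : Set (X ⊕ Y)) :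
    zeta S T t s = ENNReal.ofReal t * S.μ (Sum.inl ⁻¹' s)
      + ENNReal.ofReal (1 - t) * T.μ (Sum.inr ⁻¹' s) := by
  rw [zeta, Measure.add_apply, Measure.smul_apply, Measure.smul_apply,
    mInl.map_apply, mInr.map_apply, smul_eq_mul, smul_eq_mul]

theorem ae_zeta_of (S : StdStr Γ X) (T : StdStr Γ Y) (t : ℝ) {p : X ⊕ Y → Prop}
    (hX : ∀ᵐ x ∂S.μ, p (Sum.inl x)) (hY : ∀ᵐ y ∂T.μ, p (Sum.inr y)) :
    ∀ᵐ z ∂(zeta S T t), p z := by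
  rw [MeasureTheory.ae_iff] at *
  rw [zeta_apply]
  have e1 : (Sum.inl ⁻¹' {z : X ⊕ Y | ¬p z}) = {x | ¬p (Sum.inl x)} := rfl
  have e2 : (Sum.inr ⁻¹' {z : X ⊕ Y | ¬p z}) = {y | ¬p (Sum.inr y)} := rfl
  rw [e1, e2, hX, hY, mul_zero, mul_zero, add_zero]

theorem ae_zeta_inl (S : StdStr Γ X) (T : StdStr Γ Y) {t : ℝ} (htpos : 0 < t)
    {p : X ⊕ Y → Prop} (h : ∀ᵐ z ∂(zeta S T t), p z) : ∀ᵐ x ∂S.μ, p (Sum.inl x) := by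
  rw [MeasureTheory.ae_iff] at *
  rw [zeta_apply] at h
  rcases add_eq_zero.1 h with ⟨h1, -⟩
  rcases mul_eq_zero.1 h1 with h1 | h1
  · exact absurd h1 (by simp [ENNReal.ofReal_eq_zero, not_le, htpos])
  · exact h1

theorem ae_zeta_inr (S : StdStr Γ X) (T : StdStr Γ Y) {t : ℝ} (htpos : t < 1)
    {p : X ⊕ Y → Prop} (h : ∀ᵐ z ∂(zeta S T t), p z) : ∀ᵐ y ∂T.μ, p (Sum.inr y) := by
  rw [MeasureTheory.ae_iff] at *
  rw [zeta_apply] at h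
  rcases add_eq_zero.1 h with ⟨-, h2⟩
  rcases mul_eq_zero.1 h2 with h2 | h2
  · exact absurd h2 (by simp [ENNReal.ofReal_eq_zero, not_le]; linarith)
  · exact h2

theorem qmp_inl (S : StdStr Γ X) (T : StdStr Γ Y) {t : ℝ} (htpos : 0 < t) :
    Measure.QuasiMeasurePreserving (Sum.inl : X → X ⊕ Y) S.μ (zeta S T t) :=
  ⟨measurable_inl, fun s hs => by
    rw [mInl.map_apply]
    rw [zeta_apply] at hs
    rcases add_eq_zero.1 hs with ⟨h1, -⟩
    rcases mul_eq_zero.1 h1 with h1 | h1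
    · exact absurd h1 (by simp [ENNReal.ofReal_eq_zero, not_le, htpos])
    · exact h1⟩

theorem qmp_inr (S : StdStr Γ X) (T : StdStr Γ Y) {t : ℝ} (htpos : t < 1) :
    Measure.QuasiMeasurePreserving (Sum.inr : Y → X ⊕ Y) T.μ (zeta S T t) :=
  ⟨measurable_inr, fun s hs => by
    rw [mInr.map_apply]
    rw [zeta_apply] at hs
    rcases add_eq_zero.1 hs with ⟨-, h2⟩
    rcases mul_eq_zero.1 h2 with h2 | h2
    · exact absurd h2 (by simp [ENNReal.ofReal_eq_zero, not_le]; linarith)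
    · exact h2⟩

/-- The standard `Γ`-space structure on the disjoint union. -/
noncomputable def stdSum (S : StdStr Γ X) (T : StdStr Γ Y) (t : ℝ)
    (ht : t ∈ Set.Icc (0 : ℝ) 1) : StdStr Γ (X ⊕ Y) where
  μ := zeta S T t
  borel := standardBorel_sum S.borel T.borel
  prob := by
    constructor
    rw [zeta_apply]
    simp only [Set.preimage_univ]
    haveI := S.prob; haveI := T.prob
    rw [measure_univ, measure_univ, mul_one, mul_one,
      ← ENNReal.ofReal_add ht.1 (by linarith [ht.2])]
    norm_num
  act g := Sum.map (S.act g) (T.act g)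
  meas g := by
    constructor
    · exact ((S.meas g).measurable).sumMap ((T.meas g).measurable)
    · have hmap : Measurable (Sum.map (S.act g) (T.act g)) :=
        ((S.meas g).measurable).sumMap ((T.meas g).measurable)
      simp only [zeta]
      rw [Measure.map_add _ _ hmap, Measure.map_smul, Measure.map_smul,
        Measure.map_map hmap measurable_inl, Measure.map_map hmap measurable_inr]
      have e1 : (Sum.map (S.act g) (T.act g)) ∘ Sum.inl
          = (Sum.inl : X → X ⊕ Y) ∘ S.act g := rfl
      have e2 : (Sum.map (S.act g) (T.act g)) ∘ Sum.inr
          = (Sum.inr : Y → X ⊕ Y) ∘ T.act g := rfl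
      rw [e1, e2, ← Measure.map_map measurable_inl (S.meas g).measurable,
        ← Measure.map_map measurable_inr (T.meas g).measurable,
        (S.meas g).map_eq, (T.meas g).map_eq]
  act_one x := by cases x <;> simp [S.act_one, T.act_one]
  act_mul g h x := by cases x <;> simp [S.act_mul, T.act_mul]

end SVAux
end Part5
section Part6
open MeasureTheory Finsupp
open scoped ENNReal

namespace SVAux

variable {Γ : Type} [Group Γ] {X Y : Type} [MeasurableSpace X] [MeasurableSpace Y]

/-- Extension by zero of an a.e.-class on `X` to the disjoint union. -/
noncomputable def combL0 (S : StdStr Γ X) (T : StdStr Γ Y) (t : ℝ) (a : X →ₘ[S.μ] ℝ) :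
    (X ⊕ Y) →ₘ[zeta S T t] ℝ :=
  AEEqFun.mk (Sum.elim ⇑a 0)
    ((a.measurable.sumElim measurable_const).stronglyMeasurable.aestronglyMeasurable)

theorem coeFn_combL0 (S : StdStr Γ X) (T : StdStr Γ Y) (t : ℝ) (a : X →ₘ[S.μ] ℝ) :
    ⇑(combL0 S T t a) =ᵐ[zeta S T t] Sum.elim ⇑a 0 :=
  AEEqFun.coeFn_mk _ _

/-- Extension by zero of an a.e.-class on `Y` to the disjoint union. -/
noncomputable def combR0 (S : StdStr Γ X) (T : StdStr Γ Y) (t : ℝ) (a : Y →ₘ[T.μ] ℝ) :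
    (X ⊕ Y) →ₘ[zeta S T t] ℝ :=
  AEEqFun.mk (Sum.elim 0 ⇑a)
    ((measurable_const.sumElim a.measurable).stronglyMeasurable.aestronglyMeasurable)

theorem coeFn_combR0 (S : StdStr Γ X) (T : StdStr Γ Y) (t : ℝ) (a : Y →ₘ[T.μ] ℝ) :
    ⇑(combR0 S T t a) =ᵐ[zeta S T t] Sum.elim 0 ⇑a :=
  AEEqFun.coeFn_mk _ _

variable (S : StdStr Γ X) (T : StdStr Γ Y) {t : ℝ} (ht : t ∈ Set.Icc (0 : ℝ) 1) (b : Bool)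

/-- Extension by zero on the coefficient modules, left version. -/
noncomputable def combL (f : LinfG S b) : LinfG (stdSum S T t ht) b := by
  refine ⟨combL0 S T t (f : X →ₘ[S.μ] ℝ), ?_, ?_⟩
  · obtain ⟨C, hC⟩ := f.2.1
    refine ⟨max C 0, ?_⟩
    have hx : ∀ᵐ x ∂S.μ, |Sum.elim ⇑(f : X →ₘ[S.μ] ℝ) (0 : Y → ℝ) (Sum.inl x)| ≤ max C 0 := by
      filter_upwards [hC] with x hx
      exact le_trans hx (le_max_left _ _)
    have hy : ∀ᵐ y ∂T.μ, |Sum.elim ⇑(f : X →ₘ[S.μ] ℝ) (0 : Y → ℝ) (Sum.inr y)| ≤ max C 0 :=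
      Filter.Eventually.of_forall fun y => by simp [le_max_right]
    filter_upwards [coeFn_combL0 S T t _, ae_zeta_of S T t
      (p := fun z => |Sum.elim ⇑(f : X →ₘ[S.μ] ℝ) (0 : Y → ℝ) z| ≤ max C 0) hx hy] with z h1 h2
    erw [h1]; exact h2
  · intro hb
    obtain hint := f.2.2 hb
    have hx : ∀ᵐ x ∂S.μ, ∃ k : ℤ, Sum.elim ⇑(f : X →ₘ[S.μ] ℝ) (0 : Y → ℝ) (Sum.inl x) = (k : ℝ) := by
      filter_upwards [hint] with x hx; exact hx
    have hy : ∀ᵐ y ∂T.μ, ∃ k : ℤ, Sum.elim ⇑(f : X →ₘ[S.μ] ℝ) (0 : Y → ℝ) (Sum.inr y) = (k : ℝ) :=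
      Filter.Eventually.of_forall fun y => ⟨0, by simp⟩
    filter_upwards [coeFn_combL0 S T t _, ae_zeta_of S T t
      (p := fun z => ∃ k : ℤ, Sum.elim ⇑(f : X →ₘ[S.μ] ℝ) (0 : Y → ℝ) z = (k : ℝ)) hx hy] with z h1 h2
    erw [h1]; exact h2

/-- Extension by zero on the coefficient modules, right version. -/
noncomputable def combR (f : LinfG T b) : LinfG (stdSum S T t ht) b := by
  refine ⟨combR0 S T t (f : Y →ₘ[T.μ] ℝ), ?_, ?_⟩
  · obtain ⟨C, hC⟩ := f.2.1
    refine ⟨max C 0, ?_⟩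
    have hy : ∀ᵐ y ∂T.μ, |Sum.elim (0 : X → ℝ) ⇑(f : Y →ₘ[T.μ] ℝ) (Sum.inr y)| ≤ max C 0 := by
      filter_upwards [hC] with y hy
      exact le_trans hy (le_max_left _ _)
    have hx : ∀ᵐ x ∂S.μ, |Sum.elim (0 : X → ℝ) ⇑(f : Y →ₘ[T.μ] ℝ) (Sum.inl x)| ≤ max C 0 :=
      Filter.Eventually.of_forall fun x => by simp [le_max_right]
    filter_upwards [coeFn_combR0 S T t _, ae_zeta_of S T t
      (p := fun z => |Sum.elim (0 : X → ℝ) ⇑(f : Y →ₘ[T.μ] ℝ) z| ≤ max C 0) hx hy] with z h1 h2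
    erw [h1]; exact h2
  · intro hb
    obtain hint := f.2.2 hb
    have hy : ∀ᵐ y ∂T.μ, ∃ k : ℤ, Sum.elim (0 : X → ℝ) ⇑(f : Y →ₘ[T.μ] ℝ) (Sum.inr y) = (k : ℝ) := by
      filter_upwards [hint] with y hy; exact hy
    have hx : ∀ᵐ x ∂S.μ, ∃ k : ℤ, Sum.elim (0 : X → ℝ) ⇑(f : Y →ₘ[T.μ] ℝ) (Sum.inl x) = (k : ℝ) :=
      Filter.Eventually.of_forall fun x => ⟨0, by simp⟩
    filter_upwards [coeFn_combR0 S T t _, ae_zeta_of S T t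
      (p := fun z => ∃ k : ℤ, Sum.elim (0 : X → ℝ) ⇑(f : Y →ₘ[T.μ] ℝ) z = (k : ℝ)) hx hy] with z h1 h2
    erw [h1]; exact h2

/-- Reinterpret a coefficient on the disjoint union over the measure `zeta`. -/
abbrev toZ (f : LinfG (stdSum S T t ht) b) : (X ⊕ Y) →ₘ[zeta S T t] ℝ :=
  (f : (X ⊕ Y) →ₘ[(stdSum S T t ht).μ] ℝ)

/-- Restriction to `X` of a coefficient on the disjoint union. -/
noncomputable def restrL (htpos : 0 < t) (f : LinfG (stdSum S T t ht) b) : LinfG S b := by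
  refine ⟨AEEqFun.compQuasiMeasurePreserving (toZ S T ht b f) Sum.inl (qmp_inl S T htpos),
    ?_, ?_⟩
  · obtain ⟨C, hC⟩ := f.2.1
    refine ⟨C, ?_⟩
    filter_upwards [AEEqFun.coeFn_compQuasiMeasurePreserving (toZ S T ht b f)
      (qmp_inl S T htpos),
      ae_zeta_inl S T htpos hC] with x h1 h2
    rw [h1]; exact h2
  · intro hb
    obtain hint := f.2.2 hb
    filter_upwards [AEEqFun.coeFn_compQuasiMeasurePreserving (toZ S T ht b f)
      (qmp_inl S T htpos),
      ae_zeta_inl S T htpos hint] with x h1 h2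
    rw [h1]; exact h2

/-- Restriction to `Y` of a coefficient on the disjoint union. -/
noncomputable def restrR (htpos : t < 1) (f : LinfG (stdSum S T t ht) b) : LinfG T b := by
  refine ⟨AEEqFun.compQuasiMeasurePreserving (toZ S T ht b f) Sum.inr (qmp_inr S T htpos),
    ?_, ?_⟩
  · obtain ⟨C, hC⟩ := f.2.1
    refine ⟨C, ?_⟩
    filter_upwards [AEEqFun.coeFn_compQuasiMeasurePreserving (toZ S T ht b f)
      (qmp_inr S T htpos),
      ae_zeta_inr S T htpos hC] with y h1 h2
    rw [h1]; exact h2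
  · intro hb
    obtain hint := f.2.2 hb
    filter_upwards [AEEqFun.coeFn_compQuasiMeasurePreserving (toZ S T ht b f)
      (qmp_inr S T htpos),
      ae_zeta_inr S T htpos hint] with y h1 h2
    rw [h1]; exact h2

end SVAux
end Part6
section Part7
open MeasureTheory Finsupp
open scoped ENNReal

namespace SVAux

variable {Γ : Type} [Group Γ] {X Y : Type} [MeasurableSpace X] [MeasurableSpace Y]
  (S : StdStr Γ X) (T : StdStr Γ Y) {t : ℝ} (ht : t ∈ Set.Icc (0 : ℝ) 1) (b : Bool)

theorem combL0_add (a c : X →ₘ[S.μ] ℝ) :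
    combL0 S T t (a + c) = combL0 S T t a + combL0 S T t c := by
  apply MeasureTheory.AEEqFun.ext
  have hx : ∀ᵐ x ∂S.μ, Sum.elim ⇑(a + c) (0 : Y → ℝ) (Sum.inl x)
      = Sum.elim ⇑a (0 : Y → ℝ) (Sum.inl x) + Sum.elim ⇑c (0 : Y → ℝ) (Sum.inl x) := by
    filter_upwards [AEEqFun.coeFn_add a c] with x h
    simpa using h
  have hy : ∀ᵐ y ∂T.μ, Sum.elim ⇑(a + c) (0 : Y → ℝ) (Sum.inr y)
      = Sum.elim ⇑a (0 : Y → ℝ) (Sum.inr y) + Sum.elim ⇑c (0 : Y → ℝ) (Sum.inr y) :=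
    Filter.Eventually.of_forall fun y => by simp
  filter_upwards [coeFn_combL0 S T t (a + c),
    AEEqFun.coeFn_add (combL0 S T t a) (combL0 S T t c), coeFn_combL0 S T t a,
    coeFn_combL0 S T t c,
    ae_zeta_of S T t (p := fun z => Sum.elim ⇑(a + c) (0 : Y → ℝ) z
      = Sum.elim ⇑a (0 : Y → ℝ) z + Sum.elim ⇑c (0 : Y → ℝ) z) hx hy] with z e1 e2 e3 e4 e5
  exact (e1.trans e5).trans        -- elim a z + elim c z
    ((congrArg₂ (· + ·) e3.symm e4.symm).trans e2.symm)

theorem combR0_add (a c : Y →ₘ[T.μ] ℝ) :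
    combR0 S T t (a + c) = combR0 S T t a + combR0 S T t c := by
  apply MeasureTheory.AEEqFun.ext
  have hy : ∀ᵐ y ∂T.μ, Sum.elim (0 : X → ℝ) ⇑(a + c) (Sum.inr y)
      = Sum.elim (0 : X → ℝ) ⇑a (Sum.inr y) + Sum.elim (0 : X → ℝ) ⇑c (Sum.inr y) := by
    filter_upwards [AEEqFun.coeFn_add a c] with y h
    simpa using h
  have hx : ∀ᵐ x ∂S.μ, Sum.elim (0 : X → ℝ) ⇑(a + c) (Sum.inl x)
      = Sum.elim (0 : X → ℝ) ⇑a (Sum.inl x) + Sum.elim (0 : X → ℝ) ⇑c (Sum.inl x) :=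
    Filter.Eventually.of_forall fun x => by simp
  filter_upwards [coeFn_combR0 S T t (a + c),
    AEEqFun.coeFn_add (combR0 S T t a) (combR0 S T t c), coeFn_combR0 S T t a,
    coeFn_combR0 S T t c,
    ae_zeta_of S T t (p := fun z => Sum.elim (0 : X → ℝ) ⇑(a + c) z
      = Sum.elim (0 : X → ℝ) ⇑a z + Sum.elim (0 : X → ℝ) ⇑c z) hx hy] with z e1 e2 e3 e4 e5
  exact (e1.trans e5).trans
    ((congrArg₂ (· + ·) e3.symm e4.symm).trans e2.symm)

/-- `combL` as a linear map. -/
noncomputable def combLhom : (LinfG S b) →ₗ[ℤ] (LinfG (stdSum S T t ht) b) :=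
  AddMonoidHom.toIntLinearMap
    { toFun := combL S T ht b
      map_zero' := by
        apply Subtype.ext
        show combL0 S T t ((0 : LinfG S b) : X →ₘ[S.μ] ℝ) = 0
        apply MeasureTheory.AEEqFun.ext
        have hx : ∀ᵐ x ∂S.μ,
            Sum.elim ⇑((0 : LinfG S b) : X →ₘ[S.μ] ℝ) (0 : Y → ℝ) (Sum.inl x) = 0 := by
          filter_upwards [AEEqFun.coeFn_zero (μ := S.μ) (β := ℝ)] with x h
          simpa using h
        have hy : ∀ᵐ y ∂T.μ,
            Sum.elim ⇑((0 : LinfG S b) : X →ₘ[S.μ] ℝ) (0 : Y → ℝ) (Sum.inr y) = 0 :=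
          Filter.Eventually.of_forall fun y => by simp
        filter_upwards [coeFn_combL0 S T t ((0 : LinfG S b) : X →ₘ[S.μ] ℝ),
          AEEqFun.coeFn_zero (μ := zeta S T t) (β := ℝ),
          ae_zeta_of S T t (p := fun z =>
            Sum.elim ⇑((0 : LinfG S b) : X →ₘ[S.μ] ℝ) (0 : Y → ℝ) z = 0) hx hy] with z e1 e2 e3
        exact (e1.trans e3).trans e2.symm
      map_add' := fun f g => Subtype.ext (combL0_add S T _ _) }

/-- `combR` as a linear map. -/
noncomputable def combRhom : (LinfG T b) →ₗ[ℤ] (LinfG (stdSum S T t ht) b) :=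
  AddMonoidHom.toIntLinearMap
    { toFun := combR S T ht b
      map_zero' := by
        apply Subtype.ext
        show combR0 S T t ((0 : LinfG T b) : Y →ₘ[T.μ] ℝ) = 0
        apply MeasureTheory.AEEqFun.ext
        have hy : ∀ᵐ y ∂T.μ,
            Sum.elim (0 : X → ℝ) ⇑((0 : LinfG T b) : Y →ₘ[T.μ] ℝ) (Sum.inr y) = 0 := by
          filter_upwards [AEEqFun.coeFn_zero (μ := T.μ) (β := ℝ)] with y h
          simpa using h
        have hx : ∀ᵐ x ∂S.μ,
            Sum.elim (0 : X → ℝ) ⇑((0 : LinfG T b) : Y →ₘ[T.μ] ℝ) (Sum.inl x) = 0 :=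
          Filter.Eventually.of_forall fun x => by simp
        filter_upwards [coeFn_combR0 S T t ((0 : LinfG T b) : Y →ₘ[T.μ] ℝ),
          AEEqFun.coeFn_zero (μ := zeta S T t) (β := ℝ),
          ae_zeta_of S T t (p := fun z =>
            Sum.elim (0 : X → ℝ) ⇑((0 : LinfG T b) : Y →ₘ[T.μ] ℝ) z = 0) hx hy] with z e1 e2 e3
        exact (e1.trans e3).trans e2.symm
      map_add' := fun f g => Subtype.ext (combR0_add S T _ _) }

/-- `restrL` as a linear map. -/
noncomputable def restrLhom (htpos : 0 < t) :
    (LinfG (stdSum S T t ht) b) →ₗ[ℤ] (LinfG S b) :=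
  AddMonoidHom.toIntLinearMap
    { toFun := restrL S T ht b htpos
      map_zero' := by
        apply Subtype.ext
        show AEEqFun.compQuasiMeasurePreserving (toZ S T ht b 0) Sum.inl
          (qmp_inl S T htpos) = (0 : X →ₘ[S.μ] ℝ)
        apply MeasureTheory.AEEqFun.ext
        have h0 : ∀ᵐ x ∂S.μ,
            ⇑(toZ S T ht b 0) (Sum.inl x) = 0 :=
          ae_zeta_inl S T htpos (by
            filter_upwards [AEEqFun.coeFn_zero (μ := zeta S T t) (β := ℝ)] with z h
            exact h)
        filter_upwards [AEEqFun.coeFn_compQuasiMeasurePreserving (toZ S T ht b 0)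
          (qmp_inl S T htpos), h0, AEEqFun.coeFn_zero (μ := S.μ) (β := ℝ)] with x e1 e2 e3
        exact (e1.trans e2).trans e3.symm
      map_add' := fun f g => by
        apply Subtype.ext
        apply MeasureTheory.AEEqFun.ext
        have hadd : ∀ᵐ x ∂S.μ, ⇑(toZ S T ht b (f + g)) (Sum.inl x)
            = ⇑(toZ S T ht b f) (Sum.inl x) + ⇑(toZ S T ht b g) (Sum.inl x) :=
          ae_zeta_inl S T htpos (by
            filter_upwards [AEEqFun.coeFn_add (toZ S T ht b f) (toZ S T ht b g)] with z h
            exact h.trans rfl)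
        filter_upwards [AEEqFun.coeFn_compQuasiMeasurePreserving (toZ S T ht b (f + g))
          (qmp_inl S T htpos),
          AEEqFun.coeFn_compQuasiMeasurePreserving (toZ S T ht b f) (qmp_inl S T htpos),
          AEEqFun.coeFn_compQuasiMeasurePreserving (toZ S T ht b g) (qmp_inl S T htpos),
          AEEqFun.coeFn_add (AEEqFun.compQuasiMeasurePreserving (toZ S T ht b f) Sum.inl
            (qmp_inl S T htpos)) (AEEqFun.compQuasiMeasurePreserving (toZ S T ht b g) Sum.inl
            (qmp_inl S T htpos)), hadd] with x e1 e2 e3 e4 e5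
        exact (e1.trans e5).trans ((congrArg₂ (· + ·) e2.symm e3.symm).trans e4.symm) }

/-- `restrR` as a linear map. -/
noncomputable def restrRhom (htpos : t < 1) :
    (LinfG (stdSum S T t ht) b) →ₗ[ℤ] (LinfG T b) :=
  AddMonoidHom.toIntLinearMap
    { toFun := restrR S T ht b htpos
      map_zero' := by
        apply Subtype.ext
        show AEEqFun.compQuasiMeasurePreserving (toZ S T ht b 0) Sum.inr
          (qmp_inr S T htpos) = (0 : Y →ₘ[T.μ] ℝ)
        apply MeasureTheory.AEEqFun.ext
        have h0 : ∀ᵐ y ∂T.μ,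
            ⇑(toZ S T ht b 0) (Sum.inr y) = 0 :=
          ae_zeta_inr S T htpos (by
            filter_upwards [AEEqFun.coeFn_zero (μ := zeta S T t) (β := ℝ)] with z h
            exact h)
        filter_upwards [AEEqFun.coeFn_compQuasiMeasurePreserving (toZ S T ht b 0)
          (qmp_inr S T htpos), h0, AEEqFun.coeFn_zero (μ := T.μ) (β := ℝ)] with y e1 e2 e3
        exact (e1.trans e2).trans e3.symm
      map_add' := fun f g => by
        apply Subtype.ext
        apply MeasureTheory.AEEqFun.ext
        have hadd : ∀ᵐ y ∂T.μ, ⇑(toZ S T ht b (f + g)) (Sum.inr y)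
            = ⇑(toZ S T ht b f) (Sum.inr y) + ⇑(toZ S T ht b g) (Sum.inr y) :=
          ae_zeta_inr S T htpos (by
            filter_upwards [AEEqFun.coeFn_add (toZ S T ht b f) (toZ S T ht b g)] with z h
            exact h.trans rfl)
        filter_upwards [AEEqFun.coeFn_compQuasiMeasurePreserving (toZ S T ht b (f + g))
          (qmp_inr S T htpos),
          AEEqFun.coeFn_compQuasiMeasurePreserving (toZ S T ht b f) (qmp_inr S T htpos),
          AEEqFun.coeFn_compQuasiMeasurePreserving (toZ S T ht b g) (qmp_inr S T htpos),
          AEEqFun.coeFn_add (AEEqFun.compQuasiMeasurePreserving (toZ S T ht b f) Sum.inr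
            (qmp_inr S T htpos)) (AEEqFun.compQuasiMeasurePreserving (toZ S T ht b g) Sum.inr
            (qmp_inr S T htpos)), hadd] with y e1 e2 e3 e4 e5
        exact (e1.trans e5).trans ((congrArg₂ (· + ·) e2.symm e3.symm).trans e4.symm) }

end SVAux
end Part7
section Part8
open MeasureTheory Finsupp
open scoped ENNReal

namespace SVAux

variable {Γ : Type} [Group Γ] {X Y : Type} [MeasurableSpace X] [MeasurableSpace Y]
  (S : StdStr Γ X) (T : StdStr Γ Y) {t : ℝ} (ht : t ∈ Set.Icc (0 : ℝ) 1) (b : Bool)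

theorem combL_rho (g : Γ) (f : LinfG S b) :
    combL S T ht b (rhoG S b g f) = rhoG (stdSum S T t ht) b g (combL S T ht b f) := by
  apply Subtype.ext
  apply MeasureTheory.AEEqFun.ext
  have hx : ∀ᵐ x ∂S.μ,
      Sum.elim ⇑((rhoG S b g f : LinfG S b) : X →ₘ[S.μ] ℝ) (0 : Y → ℝ) (Sum.inl x)
      = Sum.elim ⇑((f : LinfG S b) : X →ₘ[S.μ] ℝ) (0 : Y → ℝ)
          (Sum.map (S.act g) (T.act g) (Sum.inl x)) := by
    filter_upwards [AEEqFun.coeFn_compMeasurePreserving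
      ((f : LinfG S b) : X →ₘ[S.μ] ℝ) (S.meas g)] with x h
    exact h
  have hy : ∀ᵐ y ∂T.μ,
      Sum.elim ⇑((rhoG S b g f : LinfG S b) : X →ₘ[S.μ] ℝ) (0 : Y → ℝ) (Sum.inr y)
      = Sum.elim ⇑((f : LinfG S b) : X →ₘ[S.μ] ℝ) (0 : Y → ℝ)
          (Sum.map (S.act g) (T.act g) (Sum.inr y)) :=
    Filter.Eventually.of_forall fun y => rfl
  have hmain := ae_zeta_of S T t (p := fun z =>
    Sum.elim ⇑((rhoG S b g f : LinfG S b) : X →ₘ[S.μ] ℝ) (0 : Y → ℝ) z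
      = Sum.elim ⇑((f : LinfG S b) : X →ₘ[S.μ] ℝ) (0 : Y → ℝ)
          (Sum.map (S.act g) (T.act g) z)) hx hy
  have h2 := ((stdSum S T t ht).meas g).quasiMeasurePreserving.ae
    (coeFn_combL0 S T t ((f : LinfG S b) : X →ₘ[S.μ] ℝ))
  filter_upwards [coeFn_combL0 S T t ((rhoG S b g f : LinfG S b) : X →ₘ[S.μ] ℝ), hmain, h2,
    AEEqFun.coeFn_compMeasurePreserving (toZ S T ht b (combL S T ht b f))
      ((stdSum S T t ht).meas g)] with z e1 e2 e3 e4
  exact ((e1.trans e2).trans e3.symm).trans e4.symm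

theorem combR_rho (g : Γ) (f : LinfG T b) :
    combR S T ht b (rhoG T b g f) = rhoG (stdSum S T t ht) b g (combR S T ht b f) := by
  apply Subtype.ext
  apply MeasureTheory.AEEqFun.ext
  have hy : ∀ᵐ y ∂T.μ,
      Sum.elim (0 : X → ℝ) ⇑((rhoG T b g f : LinfG T b) : Y →ₘ[T.μ] ℝ) (Sum.inr y)
      = Sum.elim (0 : X → ℝ) ⇑((f : LinfG T b) : Y →ₘ[T.μ] ℝ)
          (Sum.map (S.act g) (T.act g) (Sum.inr y)) := by
    filter_upwards [AEEqFun.coeFn_compMeasurePreserving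
      ((f : LinfG T b) : Y →ₘ[T.μ] ℝ) (T.meas g)] with y h
    exact h
  have hx : ∀ᵐ x ∂S.μ,
      Sum.elim (0 : X → ℝ) ⇑((rhoG T b g f : LinfG T b) : Y →ₘ[T.μ] ℝ) (Sum.inl x)
      = Sum.elim (0 : X → ℝ) ⇑((f : LinfG T b) : Y →ₘ[T.μ] ℝ)
          (Sum.map (S.act g) (T.act g) (Sum.inl x)) :=
    Filter.Eventually.of_forall fun x => rfl
  have hmain := ae_zeta_of S T t (p := fun z =>
    Sum.elim (0 : X → ℝ) ⇑((rhoG T b g f : LinfG T b) : Y →ₘ[T.μ] ℝ) z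
      = Sum.elim (0 : X → ℝ) ⇑((f : LinfG T b) : Y →ₘ[T.μ] ℝ)
          (Sum.map (S.act g) (T.act g) z)) hx hy
  have h2 := ((stdSum S T t ht).meas g).quasiMeasurePreserving.ae
    (coeFn_combR0 S T t ((f : LinfG T b) : Y →ₘ[T.μ] ℝ))
  filter_upwards [coeFn_combR0 S T t ((rhoG T b g f : LinfG T b) : Y →ₘ[T.μ] ℝ), hmain, h2,
    AEEqFun.coeFn_compMeasurePreserving (toZ S T ht b (combR S T ht b f))
      ((stdSum S T t ht).meas g)] with z e1 e2 e3 e4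
  exact ((e1.trans e2).trans e3.symm).trans e4.symm

theorem restrL_rho (htpos : 0 < t) (g : Γ) (f : LinfG (stdSum S T t ht) b) :
    restrL S T ht b htpos (rhoG (stdSum S T t ht) b g f)
      = rhoG S b g (restrL S T ht b htpos f) := by
  apply Subtype.ext
  apply MeasureTheory.AEEqFun.ext
  have e2 := ae_zeta_inl S T htpos
    (AEEqFun.coeFn_compMeasurePreserving (toZ S T ht b f) ((stdSum S T t ht).meas g))
  have e3 := (S.meas g).quasiMeasurePreserving.ae
    (AEEqFun.coeFn_compQuasiMeasurePreserving (toZ S T ht b f) (qmp_inl S T htpos))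
  filter_upwards [AEEqFun.coeFn_compQuasiMeasurePreserving
      (toZ S T ht b (rhoG (stdSum S T t ht) b g f)) (qmp_inl S T htpos), e2, e3,
    AEEqFun.coeFn_compMeasurePreserving
      ((restrL S T ht b htpos f : LinfG S b) : X →ₘ[S.μ] ℝ) (S.meas g)] with x e1 f2 f3 e4
  exact ((e1.trans f2).trans f3.symm).trans e4.symm

theorem restrR_rho (htpos : t < 1) (g : Γ) (f : LinfG (stdSum S T t ht) b) :
    restrR S T ht b htpos (rhoG (stdSum S T t ht) b g f)
      = rhoG T b g (restrR S T ht b htpos f) := by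
  apply Subtype.ext
  apply MeasureTheory.AEEqFun.ext
  have e2 := ae_zeta_inr S T htpos
    (AEEqFun.coeFn_compMeasurePreserving (toZ S T ht b f) ((stdSum S T t ht).meas g))
  have e3 := (T.meas g).quasiMeasurePreserving.ae
    (AEEqFun.coeFn_compQuasiMeasurePreserving (toZ S T ht b f) (qmp_inr S T htpos))
  filter_upwards [AEEqFun.coeFn_compQuasiMeasurePreserving
      (toZ S T ht b (rhoG (stdSum S T t ht) b g f)) (qmp_inr S T htpos), e2, e3,
    AEEqFun.coeFn_compMeasurePreserving
      ((restrR S T ht b htpos f : LinfG T b) : Y →ₘ[T.μ] ℝ) (T.meas g)] with y e1 f2 f3 e4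
  exact ((e1.trans f2).trans f3.symm).trans e4.symm

theorem combLR_const (k : ℤ) :
    combL S T ht b (constLG S b k) + combR S T ht b (constLG T b k)
      = constLG (stdSum S T t ht) b k := by
  apply Subtype.ext
  apply MeasureTheory.AEEqFun.ext
  have hx : ∀ᵐ x ∂S.μ,
      Sum.elim ⇑((constLG S b k : LinfG S b) : X →ₘ[S.μ] ℝ) (0 : Y → ℝ) (Sum.inl x)
        + Sum.elim (0 : X → ℝ) ⇑((constLG T b k : LinfG T b) : Y →ₘ[T.μ] ℝ) (Sum.inl x)
        = (k : ℝ) := by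
    filter_upwards [coeFn_constLG S b k] with x h
    simpa using h
  have hy : ∀ᵐ y ∂T.μ,
      Sum.elim ⇑((constLG S b k : LinfG S b) : X →ₘ[S.μ] ℝ) (0 : Y → ℝ) (Sum.inr y)
        + Sum.elim (0 : X → ℝ) ⇑((constLG T b k : LinfG T b) : Y →ₘ[T.μ] ℝ) (Sum.inr y)
        = (k : ℝ) := by
    filter_upwards [coeFn_constLG T b k] with y h
    simpa using h
  filter_upwards [AEEqFun.coeFn_add (combL0 S T t ((constLG S b k : LinfG S b) : X →ₘ[S.μ] ℝ))
      (combR0 S T t ((constLG T b k : LinfG T b) : Y →ₘ[T.μ] ℝ)),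
    coeFn_combL0 S T t ((constLG S b k : LinfG S b) : X →ₘ[S.μ] ℝ),
    coeFn_combR0 S T t ((constLG T b k : LinfG T b) : Y →ₘ[T.μ] ℝ),
    ae_zeta_of S T t (p := fun z =>
      Sum.elim ⇑((constLG S b k : LinfG S b) : X →ₘ[S.μ] ℝ) (0 : Y → ℝ) z
        + Sum.elim (0 : X → ℝ) ⇑((constLG T b k : LinfG T b) : Y →ₘ[T.μ] ℝ) z = (k : ℝ))
      hx hy,
    coeFn_constLG (stdSum S T t ht) b k] with z e1 e2 e3 e4 e5
  exact (e1.trans ((congrArg₂ (· + ·) e2 e3).trans e4)).trans e5.symm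

theorem restrL_const (htpos : 0 < t) (k : ℤ) :
    restrL S T ht b htpos (constLG (stdSum S T t ht) b k) = constLG S b k := by
  apply Subtype.ext
  apply MeasureTheory.AEEqFun.ext
  have e2 := ae_zeta_inl S T htpos (coeFn_constLG (stdSum S T t ht) b k)
  filter_upwards [AEEqFun.coeFn_compQuasiMeasurePreserving
      (toZ S T ht b (constLG (stdSum S T t ht) b k)) (qmp_inl S T htpos), e2,
    coeFn_constLG S b k] with x e1 f2 e3
  exact (e1.trans f2).trans e3.symm

theorem restrR_const (htpos : t < 1) (k : ℤ) :
    restrR S T ht b htpos (constLG (stdSum S T t ht) b k) = constLG T b k := by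
  apply Subtype.ext
  apply MeasureTheory.AEEqFun.ext
  have e2 := ae_zeta_inr S T htpos (coeFn_constLG (stdSum S T t ht) b k)
  filter_upwards [AEEqFun.coeFn_compQuasiMeasurePreserving
      (toZ S T ht b (constLG (stdSum S T t ht) b k)) (qmp_inr S T htpos), e2,
    coeFn_constLG T b k] with y e1 f2 e3
  exact (e1.trans f2).trans e3.symm

end SVAux
end Part8
section Part9
open MeasureTheory Finsupp
open scoped ENNReal

namespace SVAux

variable {Γ : Type} [Group Γ] {X Y : Type} [MeasurableSpace X] [MeasurableSpace Y]
  (S : StdStr Γ X) (T : StdStr Γ Y) {t : ℝ} (ht : t ∈ Set.Icc (0 : ℝ) 1) (b : Bool)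

theorem intSplit (ht : t ∈ Set.Icc (0 : ℝ) 1) (f : (X ⊕ Y) → ℝ) (hf : StronglyMeasurable f)
    (C : ℝ)
    (hC : ∀ᵐ z ∂(zeta S T t), |f z| ≤ C) :
    ∫ z, f z ∂(zeta S T t)
      = t * ∫ x, f (Sum.inl x) ∂S.μ + (1 - t) * ∫ y, f (Sum.inr y) ∂T.μ := by
  haveI := S.prob; haveI := T.prob
  have hm1 : IsFiniteMeasure (ENNReal.ofReal t • S.μ.map (Sum.inl : X → X ⊕ Y)) := by
    constructor
    rw [Measure.smul_apply, smul_eq_mul, mInl.map_apply]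
    have h1 : S.μ (Sum.inl ⁻¹' (Set.univ : Set (X ⊕ Y))) = 1 := by
      rw [Set.preimage_univ, measure_univ]
    rw [h1, mul_one]
    exact ENNReal.ofReal_lt_top
  have hm2 : IsFiniteMeasure (ENNReal.ofReal (1 - t) • T.μ.map (Sum.inr : Y → X ⊕ Y)) := by
    constructor
    rw [Measure.smul_apply, smul_eq_mul, mInr.map_apply]
    have h1 : T.μ (Sum.inr ⁻¹' (Set.univ : Set (X ⊕ Y))) = 1 := by
      rw [Set.preimage_univ, measure_univ]
    rw [h1, mul_one]
    exact ENNReal.ofReal_lt_top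
  have hle1 : (ENNReal.ofReal t • S.μ.map (Sum.inl : X → X ⊕ Y)) ≤ zeta S T t :=
    Measure.le_add_right le_rfl
  have hle2 : (ENNReal.ofReal (1 - t) • T.μ.map (Sum.inr : Y → X ⊕ Y)) ≤ zeta S T t := by
    rw [zeta, add_comm]
    exact Measure.le_add_right le_rfl
  have hint1 : Integrable f (ENNReal.ofReal t • S.μ.map (Sum.inl : X → X ⊕ Y)) := by
    refine ⟨hf.aestronglyMeasurable, ?_⟩
    apply HasFiniteIntegral.of_bounded (C := C)
    filter_upwards [hC.filter_mono (ae_mono hle1)] with z h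
    rwa [Real.norm_eq_abs]
  have hint2 : Integrable f (ENNReal.ofReal (1 - t) • T.μ.map (Sum.inr : Y → X ⊕ Y)) := by
    refine ⟨hf.aestronglyMeasurable, ?_⟩
    apply HasFiniteIntegral.of_bounded (C := C)
    filter_upwards [hC.filter_mono (ae_mono hle2)] with z h
    rwa [Real.norm_eq_abs]
  have hz : zeta S T t
      = (ENNReal.ofReal t • S.μ.map (Sum.inl : X → X ⊕ Y)) + (ENNReal.ofReal (1 - t) • T.μ.map (Sum.inr : Y → X ⊕ Y)) := rfl
  rw [hz, integral_add_measure hint1 hint2, integral_smul_measure, integral_smul_measure,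
    mInl.integral_map, mInr.integral_map, ENNReal.toReal_ofReal ht.1,
    ENNReal.toReal_ofReal (by linarith [ht.2] : (0 : ℝ) ≤ 1 - t), smul_eq_mul, smul_eq_mul]

theorem intSplit_coeff (f : LinfG (stdSum S T t ht) b) :
    ∫ z, |⇑(toZ S T ht b f) z| ∂(zeta S T t)
      = t * ∫ x, |⇑(toZ S T ht b f) (Sum.inl x)| ∂S.μ
        + (1 - t) * ∫ y, |⇑(toZ S T ht b f) (Sum.inr y)| ∂T.μ := by
  obtain ⟨C, hC⟩ := f.2.1
  refine intSplit S T ht _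
    ((toZ S T ht b f).stronglyMeasurable.measurable.abs.stronglyMeasurable) C ?_
  filter_upwards [hC] with z h
  rwa [abs_abs]

theorem int_comb_coeff (a : LinfG S b) (c : LinfG T b) :
    ∫ z, |⇑(toZ S T ht b (combLhom S T ht b a + combRhom S T ht b c)) z| ∂(zeta S T t)
      = t * ∫ x, |⇑((a : LinfG S b) : X →ₘ[S.μ] ℝ) x| ∂S.μ
        + (1 - t) * ∫ y, |⇑((c : LinfG T b) : Y →ₘ[T.μ] ℝ) y| ∂T.μ := by
  rw [intSplit_coeff]
  have hmain : ∀ᵐ z ∂(zeta S T t),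
      ⇑(toZ S T ht b (combLhom S T ht b a + combRhom S T ht b c)) z
        = Sum.elim ⇑((a : LinfG S b) : X →ₘ[S.μ] ℝ) (0 : Y → ℝ) z
          + Sum.elim (0 : X → ℝ) ⇑((c : LinfG T b) : Y →ₘ[T.μ] ℝ) z := by
    filter_upwards [AEEqFun.coeFn_add (combL0 S T t ((a : LinfG S b) : X →ₘ[S.μ] ℝ))
        (combR0 S T t ((c : LinfG T b) : Y →ₘ[T.μ] ℝ)),
      coeFn_combL0 S T t ((a : LinfG S b) : X →ₘ[S.μ] ℝ),
      coeFn_combR0 S T t ((c : LinfG T b) : Y →ₘ[T.μ] ℝ)] with z e1 e2 e3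
    exact e1.trans (congrArg₂ (· + ·) e2 e3)
  congr 1
  · rcases eq_or_lt_of_le ht.1 with h0 | h0
    · exact mul_eq_mul_left_iff.2 (Or.inr h0.symm)
    · refine mul_eq_mul_left_iff.2 (Or.inl ?_)
      apply integral_congr_ae
      filter_upwards [ae_zeta_inl S T h0 hmain] with x h
      rw [h]
      simp
  · rcases eq_or_lt_of_le ht.2 with h1 | h1
    · exact mul_eq_mul_left_iff.2 (Or.inr (by rw [h1, sub_self]))
    · refine mul_eq_mul_left_iff.2 (Or.inl ?_)
      apply integral_congr_ae
      filter_upwards [ae_zeta_inr S T h1 hmain] with y h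
      rw [h]
      simp

theorem int_restrL_coeff (htpos : 0 < t) (f : LinfG (stdSum S T t ht) b) :
    ∫ x, |⇑((restrLhom S T ht b htpos f : LinfG S b) : X →ₘ[S.μ] ℝ) x| ∂S.μ
      = ∫ x, |⇑(toZ S T ht b f) (Sum.inl x)| ∂S.μ := by
  apply integral_congr_ae
  filter_upwards [AEEqFun.coeFn_compQuasiMeasurePreserving (toZ S T ht b f)
    (qmp_inl S T htpos)] with x h
  rw [show ⇑((restrLhom S T ht b htpos f : LinfG S b) : X →ₘ[S.μ] ℝ) x
    = ⇑(toZ S T ht b f) (Sum.inl x) from h]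

theorem int_restrR_coeff (htpos : t < 1) (f : LinfG (stdSum S T t ht) b) :
    ∫ y, |⇑((restrRhom S T ht b htpos f : LinfG T b) : Y →ₘ[T.μ] ℝ) y| ∂T.μ
      = ∫ y, |⇑(toZ S T ht b f) (Sum.inr y)| ∂T.μ := by
  apply integral_congr_ae
  filter_upwards [AEEqFun.coeFn_compQuasiMeasurePreserving (toZ S T ht b f)
    (qmp_inr S T htpos)] with y h
  rw [show ⇑((restrRhom S T ht b htpos f : LinfG T b) : Y →ₘ[T.μ] ℝ) y
    = ⇑(toZ S T ht b f) (Sum.inr y) from h]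

end SVAux
end Part9
section Part10
open MeasureTheory Finsupp
open scoped ENNReal

namespace SVAux

theorem aux_zero {t A B : ℝ} (h : t = 0) : t * A + (1 - t) * B = B := by rw [h]; ring

theorem aux_one {t A B : ℝ} (h : t = 1) : t * A + (1 - t) * B = A := by rw [h]; ring

variable {Γ : Type} [Group Γ] {X Y : Type} [MeasurableSpace X] [MeasurableSpace Y]
  {Mt M : Type} [TopologicalSpace Mt] [TopologicalSpace M]
  {π : C(Mt, M)} {actM : Γ → C(Mt, Mt)}
  (S : StdStr Γ X) (T : StdStr Γ Y) {t : ℝ} (ht : t ∈ Set.Icc (0 : ℝ) 1) (b : Bool)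

theorem chmap_support {A B : Type} [AddCommGroup A] [AddCommGroup B] {n : ℕ}
    (φ : A →ₗ[ℤ] B) (c : SChains n Mt A) : (chmap φ c).support ⊆ c.support := by
  rw [Finsupp.mapRange.linearMap_apply]
  exact Finsupp.support_mapRange

theorem normP_comb {n : ℕ} (cX : SChains n Mt (LinfG S b)) (cY : SChains n Mt (LinfG T b)) :
    normP (stdSum S T t ht) b (chmap (combLhom S T ht b) cX + chmap (combRhom S T ht b) cY)
      = t * normP S b cX + (1 - t) * normP T b cY := by
  classical
  have hsub : (chmap (combLhom S T ht b) cX + chmap (combRhom S T ht b) cY).support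
      ⊆ cX.support ∪ cY.support :=
    subset_trans Finsupp.support_add
      (Finset.union_subset_union (chmap_support _ _) (chmap_support _ _))
  rw [normP_eq_sum (stdSum S T t ht) b _ hsub,
    normP_eq_sum S b cX Finset.subset_union_left,
    normP_eq_sum T b cY Finset.subset_union_right,
    Finset.mul_sum, Finset.mul_sum, ← Finset.sum_add_distrib]
  refine Finset.sum_congr rfl fun σ _ => ?_
  have hcoeff : (chmap (combLhom S T ht b) cX + chmap (combRhom S T ht b) cY) σ
      = combLhom S T ht b (cX σ) + combRhom S T ht b (cY σ) := by
    rw [Finsupp.add_apply, chmap_apply, chmap_apply]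
  rw [hcoeff]
  exact int_comb_coeff S T ht b (cX σ) (cY σ)

theorem normP_restr_mid (htpos0 : 0 < t) (htpos1 : t < 1) {n : ℕ}
    (c : SChains n Mt (LinfG (stdSum S T t ht) b)) :
    normP (stdSum S T t ht) b c
      = t * normP S b (chmap (restrLhom S T ht b htpos0) c)
        + (1 - t) * normP T b (chmap (restrRhom S T ht b htpos1) c) := by
  rw [normP_eq_sum (stdSum S T t ht) b c (subset_refl _),
    normP_eq_sum S b _ (chmap_support _ _), normP_eq_sum T b _ (chmap_support _ _),
    Finset.mul_sum, Finset.mul_sum, ← Finset.sum_add_distrib]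
  refine Finset.sum_congr rfl fun σ _ => ?_
  rw [chmap_apply, chmap_apply, int_restrL_coeff S T ht b htpos0 (c σ),
    int_restrR_coeff S T ht b htpos1 (c σ)]
  exact intSplit_coeff S T ht b (c σ)

theorem normP_restr_zero (hteq : t = 0) (htpos1 : t < 1) {n : ℕ}
    (c : SChains n Mt (LinfG (stdSum S T t ht) b)) :
    normP (stdSum S T t ht) b c = normP T b (chmap (restrRhom S T ht b htpos1) c) := by
  rw [normP_eq_sum (stdSum S T t ht) b c (subset_refl _),
    normP_eq_sum T b _ (chmap_support _ _)]
  refine Finset.sum_congr rfl fun σ _ => ?_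
  rw [chmap_apply, int_restrR_coeff S T ht b htpos1 (c σ)]
  exact (intSplit_coeff S T ht b (c σ)).trans (aux_zero hteq)

theorem normP_restr_one (hteq : t = 1) (htpos0 : 0 < t) {n : ℕ}
    (c : SChains n Mt (LinfG (stdSum S T t ht) b)) :
    normP (stdSum S T t ht) b c = normP S b (chmap (restrLhom S T ht b htpos0) c) := by
  rw [normP_eq_sum (stdSum S T t ht) b c (subset_refl _),
    normP_eq_sum S b _ (chmap_support _ _)]
  refine Finset.sum_congr rfl fun σ _ => ?_
  rw [chmap_apply, int_restrL_coeff S T ht b htpos0 (c σ)]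
  exact (intSplit_coeff S T ht b (c σ)).trans (aux_one hteq)

theorem iota_comb {n : ℕ} (zt : SChains n Mt ℤ) :
    chmap (combLhom S T ht b) (iotaChain S b zt) + chmap (combRhom S T ht b) (iotaChain T b zt)
      = iotaChain (stdSum S T t ht) b zt := by
  apply Finsupp.ext; intro σ
  rw [Finsupp.add_apply, chmap_apply, chmap_apply, iotaChain, iotaChain, iotaChain,
    Finsupp.mapRange_apply, Finsupp.mapRange_apply, Finsupp.mapRange_apply]
  exact combLR_const S T ht b (zt σ)

theorem isPFC_comb (hU : UnivCover Γ Mt M π actM) {n : ℕ} {z : SChains n M ℤ}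
    {cX : SChains n Mt (LinfG S b)} {cY : SChains n Mt (LinfG T b)}
    (hcX : IsPFC n Γ Mt M π actM X S b z cX) (hcY : IsPFC n Γ Mt M π actM Y T b z cY) :
    IsPFC n Γ Mt M π actM (X ⊕ Y) (stdSum S T t ht) b z
      (chmap (combLhom S T ht b) cX + chmap (combRhom S T ht b) cY) := by
  obtain ⟨h1X, ztX, hztX, h2X⟩ := hcX
  obtain ⟨h1Y, ztY, hztY, h2Y⟩ := hcY
  constructor
  · rw [map_add, chmap_bdryFrom, chmap_bdryFrom]
    exact Submodule.add_mem _
      (chmap_rel _ (fun g f => combL_rho S T ht b g f) h1X)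
      (chmap_rel _ (fun g f => combR_rho S T ht b g f) h1Y)
  · refine ⟨ztX, hztX, ?_⟩
    have hker : iotaChain T b (ztY - ztX) ∈ relSub n actM T b := by
      apply iota_ker hU
      rw [pushf_eq, map_sub, ← pushf_eq, ← pushf_eq, hztX, hztY, sub_self]
    have hY2 : cY - iotaChain T b ztX ∈ relSub n actM T b ⊔ bdriesSub n Mt (LinfG T b) := by
      have heq : cY - iotaChain T b ztX = (cY - iotaChain T b ztY) + iotaChain T b (ztY - ztX) := by
        rw [iotaChain_eq, iotaChain_eq, iotaChain_eq, map_sub]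
        abel
      rw [heq]
      exact Submodule.add_mem _ h2Y (Submodule.mem_sup_left hker)
    have hXmap := chmap_relsup (combLhom S T ht b) (fun g f => combL_rho S T ht b g f) h2X
    have hYmap := chmap_relsup (combRhom S T ht b) (fun g f => combR_rho S T ht b g f) hY2
    have heq2 : (chmap (combLhom S T ht b) cX + chmap (combRhom S T ht b) cY)
        - iotaChain (stdSum S T t ht) b ztX
        = chmap (combLhom S T ht b) (cX - iotaChain S b ztX)
          + chmap (combRhom S T ht b) (cY - iotaChain T b ztX) := by
      rw [map_sub, map_sub, ← iota_comb S T ht b ztX]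
      abel
    rw [heq2]
    exact Submodule.add_mem _ hXmap hYmap

theorem main_eq (hU : UnivCover Γ Mt M π actM) {n : ℕ} (z : SChains n M ℤ)
    (hz1 : bdryFrom n M ℤ z = 0) :
    pSV true n Γ Mt M π actM (X ⊕ Y) (stdSum S T t ht) z
      = t * pSV true n Γ Mt M π actM X S z + (1 - t) * pSV true n Γ Mt M π actM Y T z := by
  classical
  have ht0 := ht.1
  have ht1 := ht.2
  have eA : pSV true n Γ Mt M π actM (X ⊕ Y) (stdSum S T t ht) z
      = sInf {r : ℝ | ∃ c, IsPFC n Γ Mt M π actM (X ⊕ Y) (stdSum S T t ht) true z c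
          ∧ r = normP (stdSum S T t ht) true c} := rfl
  have eB : pSV true n Γ Mt M π actM X S z
      = sInf {r : ℝ | ∃ c, IsPFC n Γ Mt M π actM X S true z c ∧ r = normP S true c} := rfl
  have eC : pSV true n Γ Mt M π actM Y T z
      = sInf {r : ℝ | ∃ c, IsPFC n Γ Mt M π actM Y T true z c ∧ r = normP T true c} := rfl
  rw [eA, eB, eC]
  by_cases hzt : ∃ zt : SChains n Mt ℤ, pushf π zt = z
  swap
  · have hA : {r : ℝ | ∃ c, IsPFC n Γ Mt M π actM (X ⊕ Y) (stdSum S T t ht) true z c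
        ∧ r = normP (stdSum S T t ht) true c} = ∅ := by
      apply Set.eq_empty_iff_forall_notMem.2
      rintro r ⟨c, ⟨-, zt, hzt', -⟩, -⟩
      exact hzt ⟨zt, hzt'⟩
    have hB : {r : ℝ | ∃ c, IsPFC n Γ Mt M π actM X S true z c ∧ r = normP S true c} = ∅ := by
      apply Set.eq_empty_iff_forall_notMem.2
      rintro r ⟨c, ⟨-, zt, hzt', -⟩, -⟩
      exact hzt ⟨zt, hzt'⟩
    have hC : {r : ℝ | ∃ c, IsPFC n Γ Mt M π actM Y T true z c ∧ r = normP T true c} = ∅ := by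
      apply Set.eq_empty_iff_forall_notMem.2
      rintro r ⟨c, ⟨-, zt, hzt', -⟩, -⟩
      exact hzt ⟨zt, hzt'⟩
    rw [hA, hB, hC, Real.sInf_empty]
    ring
  obtain ⟨zt, hzt⟩ := hzt
  have hAne : Set.Nonempty {r : ℝ | ∃ c, IsPFC n Γ Mt M π actM (X ⊕ Y) (stdSum S T t ht) true z c
      ∧ r = normP (stdSum S T t ht) true c} :=
    ⟨_, _, isPFC_iota hU (stdSum S T t ht) true hz1 zt hzt, rfl⟩
  have hBne : Set.Nonempty {r : ℝ | ∃ c, IsPFC n Γ Mt M π actM X S true z c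
      ∧ r = normP S true c} := ⟨_, _, isPFC_iota hU S true hz1 zt hzt, rfl⟩
  have hCne : Set.Nonempty {r : ℝ | ∃ c, IsPFC n Γ Mt M π actM Y T true z c
      ∧ r = normP T true c} := ⟨_, _, isPFC_iota hU T true hz1 zt hzt, rfl⟩
  have hAbd : BddBelow {r : ℝ | ∃ c, IsPFC n Γ Mt M π actM (X ⊕ Y) (stdSum S T t ht) true z c
      ∧ r = normP (stdSum S T t ht) true c} := by
    refine ⟨0, ?_⟩
    rintro r ⟨c, -, rfl⟩
    exact normP_nonneg _ _ _
  have hBbd : BddBelow {r : ℝ | ∃ c, IsPFC n Γ Mt M π actM X S true z c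
      ∧ r = normP S true c} := by
    refine ⟨0, ?_⟩
    rintro r ⟨c, -, rfl⟩
    exact normP_nonneg _ _ _
  have hCbd : BddBelow {r : ℝ | ∃ c, IsPFC n Γ Mt M π actM Y T true z c
      ∧ r = normP T true c} := by
    refine ⟨0, ?_⟩
    rintro r ⟨c, -, rfl⟩
    exact normP_nonneg _ _ _
  apply le_antisymm
  · -- upper bound
    apply le_of_forall_pos_le_add
    intro ε hε
    obtain ⟨rX, hrX, hrXlt⟩ := Real.lt_sInf_add_pos hBne hε
    obtain ⟨rY, hrY, hrYlt⟩ := Real.lt_sInf_add_pos hCne hε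
    obtain ⟨cX, hcX, rfl⟩ := hrX
    obtain ⟨cY, hcY, rfl⟩ := hrY
    have hmem : normP (stdSum S T t ht) true
        (chmap (combLhom S T ht true) cX + chmap (combRhom S T ht true) cY)
        ∈ {r : ℝ | ∃ c, IsPFC n Γ Mt M π actM (X ⊕ Y) (stdSum S T t ht) true z c
          ∧ r = normP (stdSum S T t ht) true c} :=
      ⟨_, isPFC_comb S T ht true hU hcX hcY, rfl⟩
    calc sInf _ ≤ _ := csInf_le hAbd hmem
      _ = t * normP S true cX + (1 - t) * normP T true cY := normP_comb S T ht true cX cY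
      _ ≤ t * (sInf {r : ℝ | ∃ c, IsPFC n Γ Mt M π actM X S true z c ∧ r = normP S true c} + ε)
          + (1 - t) * (sInf {r : ℝ | ∃ c, IsPFC n Γ Mt M π actM Y T true z c
            ∧ r = normP T true c} + ε) := by
        have h1 := mul_le_mul_of_nonneg_left hrXlt.le ht0
        have h2 := mul_le_mul_of_nonneg_left hrYlt.le (by linarith : (0:ℝ) ≤ 1 - t)
        linarith
      _ ≤ _ + ε := by nlinarith
  · -- lower bound
    apply le_csInf hAne
    rintro r ⟨c, hc, rfl⟩
    rcases eq_or_lt_of_le ht0 with h0 | h0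
    · have h1 : t < 1 := by linarith
      have hmem : normP T true (chmap (restrRhom S T ht true h1) c)
          ∈ {r : ℝ | ∃ c, IsPFC n Γ Mt M π actM Y T true z c ∧ r = normP T true c} :=
        ⟨_, isPFC_map (restrRhom S T ht true h1) (fun g f => restrR_rho S T ht true h1 g f)
          (fun k => restrR_const S T ht true h1 k) hc, rfl⟩
      calc t * sInf _ + (1 - t) * sInf _ = sInf _ := aux_zero h0.symm
        _ ≤ normP T true (chmap (restrRhom S T ht true h1) c) := csInf_le hCbd hmem
        _ = normP (stdSum S T t ht) true c := (normP_restr_zero S T ht true h0.symm h1 c).symm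
    rcases eq_or_lt_of_le ht1 with h1 | h1
    · have hmem : normP S true (chmap (restrLhom S T ht true h0) c)
          ∈ {r : ℝ | ∃ c, IsPFC n Γ Mt M π actM X S true z c ∧ r = normP S true c} :=
        ⟨_, isPFC_map (restrLhom S T ht true h0) (fun g f => restrL_rho S T ht true h0 g f)
          (fun k => restrL_const S T ht true h0 k) hc, rfl⟩
      calc t * sInf _ + (1 - t) * sInf _ = sInf _ := aux_one h1
        _ ≤ normP S true (chmap (restrLhom S T ht true h0) c) := csInf_le hBbd hmem
        _ = normP (stdSum S T t ht) true c := (normP_restr_one S T ht true h1 h0 c).symm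
    · have hmemB : normP S true (chmap (restrLhom S T ht true h0) c)
          ∈ {r : ℝ | ∃ c, IsPFC n Γ Mt M π actM X S true z c ∧ r = normP S true c} :=
        ⟨_, isPFC_map (restrLhom S T ht true h0) (fun g f => restrL_rho S T ht true h0 g f)
          (fun k => restrL_const S T ht true h0 k) hc, rfl⟩
      have hmemC : normP T true (chmap (restrRhom S T ht true h1) c)
          ∈ {r : ℝ | ∃ c, IsPFC n Γ Mt M π actM Y T true z c ∧ r = normP T true c} :=
        ⟨_, isPFC_map (restrRhom S T ht true h1) (fun g f => restrR_rho S T ht true h1 g f)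
          (fun k => restrR_const S T ht true h1 k) hc, rfl⟩
      have hB2 := csInf_le hBbd hmemB
      have hC2 := csInf_le hCbd hmemC
      have hval := normP_restr_mid S T ht true h0 h1 c
      have e1 := mul_le_mul_of_nonneg_left hB2 ht0
      have e2 := mul_le_mul_of_nonneg_left hC2 (by linarith : (0:ℝ) ≤ 1 - t)
      linarith

end SVAux
end Part10
open scoped ENNReal in
/-- Let `M` be an oriented closed connected manifold with fundamental
group `Γ`, `(X,μ)`, `(Y,ν)` standard `Γ`-spaces and `t ∈ [0,1]`.  Let `Z = X ⊔ Y` with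
the probability measure `t·μ ⊔ (1−t)·ν` and the obvious `Γ`-action.  Then
`⎸M⎹^Z = t·⎸M⎹^X + (1−t)·⎸M⎹^Y`. -/
theorem parametrised_simplicial_volume_convex_combination
    (n : ℕ) (Γ : Type) [Group Γ] [Countable Γ]
    (M : Type) [TopologicalSpace M] [CompactSpace M] [ConnectedSpace M] [T2Space M]
    [ChartedSpace (EuclideanSpace ℝ (Fin n)) M]
    (Mt : Type) [TopologicalSpace Mt] (π : C(Mt, M)) (actM : Γ → C(Mt, Mt))
    (hU : UnivCover Γ Mt M π actM)
    (z : SChains n M ℤ) (hz : IsFundCycle n M z)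
    (X : Type) [MeasurableSpace X] (S : StdStr Γ X)
    (Y : Type) [MeasurableSpace Y] (T : StdStr Γ Y)
    (t : ℝ) (ht : t ∈ Set.Icc (0 : ℝ) 1) :
    ∃ U : StdStr Γ (X ⊕ Y),
      U.μ = ENNReal.ofReal t • S.μ.map Sum.inl + ENNReal.ofReal (1 - t) • T.μ.map Sum.inr ∧
      U.act = (fun g s => Sum.map (S.act g) (T.act g) s) ∧
      pSV true n Γ Mt M π actM (X ⊕ Y) U z =
        t * pSV true n Γ Mt M π actM X S z + (1 - t) * pSV true n Γ Mt M π actM Y T z := by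
  refine ⟨SVAux.stdSum S T t ht, rfl, rfl, ?_⟩
  exact SVAux.main_eq S T ht hU z (LinearMap.mem_ker.1 hz.1)
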